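/- arXiv:1407.2346 — 9 statements merged into one kernel-verified Lean document; each statement's English description precedes it below -/
import Mathlib

section
/- Let p be a prime, k a field of characteristic p, X a locally compact Hausdorff totally disconnected topological space, and σ : X → X a homeomorphism with σ^p = id. Let C_c^∞(X;k) denote the k-vector space of locally constant compactly supported functions X → k, on which σ acts by f ↦ f∘σ, and let X^σ ⊆ X be the fixed-point set of σ. Then for i = 0 and i = 1, the map given by restricting a function on X to X^σ descends to a k-linear isomorphism T^i(C_c^∞(X;k)) ≅ C_c^∞(X^σ;k). -/
open Set Function

set_option linter.unusedSectionVars false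
set_option linter.unusedVariables false

namespace TateAux

variable {X : Type*} [TopologicalSpace X]

lemma period_mod' {σ : X → X} {p : ℕ} (hσ : ∀ x, σ^[p] x = x) (a : ℕ) (x : X) :
    σ^[a % p] x = σ^[a] x := by
  conv_rhs => rw [← Nat.mod_add_div a p, Function.iterate_add_apply]
  congr 1
  rw [Function.iterate_mul]
  exact (Function.iterate_fixed (hσ x) _).symm ▸ rfl

lemma free_orbit' {σ : X → X} {p : ℕ} (hp : p.Prime) (hσ : ∀ x, σ^[p] x = x)
    {x : X} (hx : σ x ≠ x) {i : ℕ} (h1 : 0 < i) (h2 : i < p) : σ^[i] x ≠ x := by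
  intro h
  have hgcd := (show Function.IsPeriodicPt σ i x from h).gcd
    (show Function.IsPeriodicPt σ p x from hσ x)
  have : Nat.gcd i p = 1 := Nat.Coprime.gcd_eq_one
    (Nat.Coprime.symm ((Nat.Prime.coprime_iff_not_dvd hp).2 (Nat.not_dvd_of_pos_of_lt h1 h2)))
  rw [this] at hgcd
  exact hx hgcd

lemma iterate_continuous' {σ : X → X} (hσ : Continuous σ) (i : ℕ) : Continuous (σ^[i]) := by
  induction i with
  | zero => simpa using continuous_id
  | succ n ih => rw [Function.iterate_succ]; exact ih.comp hσ

lemma isCompact_preimage_iterate (σ : X ≃ₜ X) {S : Set X} (hS : IsCompact S) (i : ℕ) :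
    IsCompact ((⇑σ)^[i] ⁻¹' S) := by
  have h : (⇑σ)^[i] ⁻¹' S = (⇑σ.symm)^[i] '' S := by
    ext y
    constructor
    · intro hy
      exact ⟨(⇑σ)^[i] y, hy, Function.LeftInverse.iterate σ.symm_apply_apply i _⟩
    · rintro ⟨z, hz, rfl⟩
      simp only [Set.mem_preimage]
      rwa [Function.RightInverse.iterate σ.apply_symm_apply i z]
  rw [h]
  exact hS.image (iterate_continuous' σ.symm.continuous i)

lemma isLocallyConstant_indicator {k : Type*} [Zero k] {B : Set X} (hB : IsClopen B)
    {f : X → k} (hf : IsLocallyConstant f) : IsLocallyConstant (B.indicator f) := by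
  intro s
  by_cases h0 : (0 : k) ∈ s
  · have : B.indicator f ⁻¹' s = (B ∩ f ⁻¹' s) ∪ Bᶜ := by
      ext y
      by_cases hy : y ∈ B <;> simp [Set.indicator, hy, h0]
    rw [this]
    exact ((hB.2.inter (hf s)).union hB.1.isOpen_compl)
  · have : B.indicator f ⁻¹' s = B ∩ f ⁻¹' s := by
      ext y
      by_cases hy : y ∈ B <;> simp [Set.indicator, hy, h0]
    rw [this]
    exact hB.2.inter (hf s)

lemma isLocallyConstant_sum {k : Type*} [AddCommMonoid k] {ι : Type*} (s : Finset ι)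
    (F : ι → X → k) (h : ∀ i ∈ s, IsLocallyConstant (F i)) :
    IsLocallyConstant (fun x => ∑ i ∈ s, F i x) := by
  classical
  induction s using Finset.induction with
  | empty => simp only [Finset.sum_empty]; exact IsLocallyConstant.const 0
  | insert _ _ hnotmem ih =>
    rename_i a t
    simp only [Finset.sum_insert hnotmem]
    exact (h a (Finset.mem_insert_self a t)).add
      (ih fun i hi => h i (Finset.mem_insert_of_mem hi))

lemma isClopen_support {k : Type*} [Zero k] {f : X → k} (hf : IsLocallyConstant f) :
    IsClopen (Function.support f) := by
  constructor
  · have : Function.support f = (f ⁻¹' {0})ᶜ := by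
      ext y; simp [Function.mem_support]
    rw [this]
    exact (hf {0}).isClosed_compl
  · exact hf {x | x ≠ 0}

lemma sat_shift {σ : X → X} {p : ℕ} (hp : 0 < p) (hσ : ∀ x, σ^[p] x = x) (x : X)
    (P : X → Prop) : (∃ i, i < p ∧ P (σ^[i] (σ x))) ↔ (∃ i, i < p ∧ P (σ^[i] x)) := by
  have key : ∀ y : X, ∀ i, σ^[i] (σ y) = σ^[(i+1) % p] y := by
    intro y i
    rw [period_mod' hσ (i+1) y, ← Function.iterate_succ_apply]
  constructor
  · rintro ⟨i, hi, hPi⟩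
    exact ⟨(i+1) % p, Nat.mod_lt _ hp, by rwa [key x i] at hPi⟩
  · rintro ⟨i, hi, hPi⟩
    rcases Nat.eq_zero_or_pos i with rfl | hipos
    · refine ⟨p - 1, by omega, ?_⟩
      rw [key x (p-1)]
      have : (p - 1 + 1) % p = 0 := by
        have : p - 1 + 1 = p := by omega
        rw [this, Nat.mod_self]
      rw [this]
      simpa using hPi
    · refine ⟨i - 1, by omega, ?_⟩
      rw [key x (i-1)]
      have : (i - 1 + 1) % p = i := by
        have : i - 1 + 1 = i := by omega
        rw [this, Nat.mod_eq_of_lt hi]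
      rwa [this]

lemma inv_preimage_iff {σ : X → X} {M : Set X} (hM : σ ⁻¹' M = M) (x : X) :
    σ x ∈ M ↔ x ∈ M := by
  constructor
  · intro h; rw [← hM]; exact h
  · intro h; rw [← hM] at h; exact h

lemma inv_iterate_mem {σ : X → X} {M : Set X} (hM : σ ⁻¹' M = M) (i : ℕ) (x : X) :
    σ^[i] x ∈ M ↔ x ∈ M := by
  induction i with
  | zero => simp
  | succ n ih => rw [Function.iterate_succ_apply', inv_preimage_iff hM]; exact ih

lemma inter_sat_inv {σ : X → X} {p : ℕ} (hppos : 0 < p) (hσ : ∀ x, σ^[p] x = x) (W : Set X) :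
    σ ⁻¹' (⋂ i ∈ Finset.range p, σ^[i] ⁻¹' W) = ⋂ i ∈ Finset.range p, σ^[i] ⁻¹' W := by
  ext y
  simp only [Set.mem_preimage, Set.mem_iInter, Finset.mem_range]
  constructor
  · intro h i hi
    rcases Nat.eq_zero_or_pos i with rfl | hipos
    · have := h (p - 1) (by omega)
      rwa [← Function.iterate_succ_apply, show (p - 1).succ = p by omega, hσ y] at this
    · have := h (i - 1) (by omega)
      rwa [← Function.iterate_succ_apply, show (i - 1).succ = i by omega] at this
  · intro h i hi
    rw [← Function.iterate_succ_apply]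
    rw [← period_mod' hσ (i + 1) y]
    exact h _ (Nat.mod_lt _ hppos)

lemma union_sat_inv {σ : X → X} {p : ℕ} (hppos : 0 < p) (hσ : ∀ x, σ^[p] x = x) (W : Set X) :
    σ ⁻¹' (⋃ i ∈ Finset.range p, σ^[i] ⁻¹' W) = ⋃ i ∈ Finset.range p, σ^[i] ⁻¹' W := by
  ext y
  simp only [Set.mem_preimage, Set.mem_iUnion, Finset.mem_range]
  constructor
  · rintro ⟨i, hi, h⟩
    rw [← Function.iterate_succ_apply, ← period_mod' hσ (i + 1) y] at h
    exact ⟨(i + 1) % p, Nat.mod_lt _ hppos, h⟩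
  · rintro ⟨i, hi, h⟩
    rcases Nat.eq_zero_or_pos i with rfl | hipos
    · refine ⟨p - 1, by omega, ?_⟩
      rwa [← Function.iterate_succ_apply, show (p - 1).succ = p by omega, hσ y]
    · refine ⟨i - 1, by omega, ?_⟩
      rwa [← Function.iterate_succ_apply, show (i - 1).succ = i by omega]

variable [LocallyCompactSpace X] [T2Space X] [TotallyDisconnectedSpace X]

lemma exists_good_nbhd (σ : X ≃ₜ X) {p : ℕ} (hp : p.Prime) (hσ : ∀ x, (⇑σ)^[p] x = x)
    {x : X} (hx : σ x ≠ x) :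
    ∃ W : Set X, IsClopen W ∧ x ∈ W ∧
      ∀ y ∈ W, ∀ i, 0 < i → i < p → (⇑σ)^[i] y ∉ W := by
  haveI : TotallySeparatedSpace X := loc_compact_t2_tot_disc_iff_tot_sep.mp inferInstance
  have hsep : ∀ j : ℕ, ∃ D : Set X, IsClopen D ∧ x ∈ D ∧ (0 < j → j < p → (⇑σ)^[j] x ∉ D) := by
    intro j
    by_cases hj : 0 < j ∧ j < p
    · have hne : x ≠ (⇑σ)^[j] x := (free_orbit' hp hσ hx hj.1 hj.2).symm
      obtain ⟨U, hU, hxU, hyU⟩ := exists_isClopen_of_totally_separated hne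
      exact ⟨U, hU, hxU, fun _ _ => hyU⟩
    · exact ⟨Set.univ, isClopen_univ, Set.mem_univ x, fun h1 h2 => absurd ⟨h1, h2⟩ hj⟩
  choose D hD using hsep
  refine ⟨⋂ j ∈ Finset.Ico 1 p, (D j \ (⇑σ)^[j] ⁻¹' (D j)), ?_, ?_, ?_⟩
  · exact isClopen_biInter_finset fun j _ =>
      (hD j).1.diff ((hD j).1.preimage (iterate_continuous' σ.continuous j))
  · refine Set.mem_biInter fun j hj => ?_
    obtain ⟨h1, h2⟩ := Finset.mem_Ico.mp hj
    exact ⟨(hD j).2.1, (hD j).2.2 h1 h2⟩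
  · intro y hy i hi1 hi2 h
    have h1 : y ∈ D i \ (⇑σ)^[i] ⁻¹' (D i) :=
      Set.mem_iInter₂.mp hy i (Finset.mem_Ico.mpr ⟨hi1, hi2⟩)
    have h2 : (⇑σ)^[i] y ∈ D i \ (⇑σ)^[i] ⁻¹' (D i) :=
      Set.mem_iInter₂.mp h i (Finset.mem_Ico.mpr ⟨hi1, hi2⟩)
    exact h1.2 h2.1

noncomputable def greedy (σ : X → X) (p : ℕ) (K : Set X) (W : ℕ → Set X) : ℕ → Set X
  | j => (W j ∩ K) \ ⋃ i ∈ Finset.range p, σ^[i] ⁻¹' (⋃ l : Fin j, greedy σ p K W l)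
  termination_by j => j
  decreasing_by exact l.isLt

lemma greedy_def (σ : X → X) (p : ℕ) (K : Set X) (W : ℕ → Set X) (j : ℕ) :
    greedy σ p K W j =
      (W j ∩ K) \ ⋃ i ∈ Finset.range p, σ^[i] ⁻¹' (⋃ l : Fin j, greedy σ p K W l) := by
  rw [greedy]

lemma greedy_subset (σ : X → X) (p : ℕ) (K : Set X) (W : ℕ → Set X) (j : ℕ) :
    greedy σ p K W j ⊆ W j ∩ K := by
  rw [greedy_def]; exact Set.diff_subset

lemma greedy_clopen (σ : X ≃ₜ X) (p : ℕ) {K : Set X} (hK : IsClopen K) {W : ℕ → Set X}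
    (hW : ∀ j, IsClopen (W j)) (j : ℕ) : IsClopen (greedy ⇑σ p K W j) := by
  induction j using Nat.strong_induction_on with
  | _ j ih =>
    rw [greedy_def]
    refine ((hW j).inter hK).diff (isClopen_biUnion_finset fun i _ => ?_)
    refine IsClopen.preimage ?_ (iterate_continuous' σ.continuous i)
    exact isClopen_iUnion_of_finite fun l : Fin j => ih l l.isLt

lemma fund_domain (σ : X ≃ₜ X) {p : ℕ} (hp : p.Prime) (hσ : ∀ x, (⇑σ)^[p] x = x)
    {K : Set X} (hKcl : IsClopen K) (hKcpt : IsCompact K) (hKinv : ⇑σ ⁻¹' K = K)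
    (hfree : ∀ x ∈ K, σ x ≠ x) :
    ∃ V : Set X, IsClopen V ∧ V ⊆ K ∧
      (∀ x ∈ K, ∃ i, i < p ∧ (⇑σ)^[i] x ∈ V) ∧
      (∀ x : X, ∀ i j, i < p → j < p → (⇑σ)^[i] x ∈ V → (⇑σ)^[j] x ∈ V → i = j) := by
  classical
  -- choose good neighborhoods
  have hnbhd : ∀ x : X, ∃ W : Set X, IsClopen W ∧ (x ∈ K → x ∈ W) ∧
      ∀ y ∈ W, ∀ i, 0 < i → i < p → (⇑σ)^[i] y ∉ W := by
    intro x
    by_cases hx : x ∈ K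
    · obtain ⟨W, h1, h2, h3⟩ := exists_good_nbhd σ hp hσ (hfree x hx)
      exact ⟨W, h1, fun _ => h2, h3⟩
    · exact ⟨∅, isClopen_empty, fun h => absurd h hx, fun y hy => absurd hy (Set.notMem_empty y)⟩
  choose W hWcl hWmem hWgood using hnbhd
  -- finite subcover
  obtain ⟨t, ht⟩ := hKcpt.elim_finite_subcover W (fun x => (hWcl x).2)
    (fun y hy => Set.mem_iUnion.mpr ⟨y, hWmem y hy⟩)
  set L := t.toList with hL
  set n := L.length with hn
  set Wf : ℕ → Set X := fun j => if h : j < n then W (L.get ⟨j, h⟩) else ∅ with hWf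
  have hWfcl : ∀ j, IsClopen (Wf j) := by
    intro j
    simp only [hWf]
    split
    · exact hWcl _
    · exact isClopen_empty
  have hWfgood : ∀ j, ∀ y ∈ Wf j, ∀ i, 0 < i → i < p → (⇑σ)^[i] y ∉ Wf j := by
    intro j y hy i h1 h2
    simp only [hWf] at hy ⊢
    by_cases h : j < n
    · rw [dif_pos h] at hy ⊢
      exact hWgood _ y hy i h1 h2
    · rw [dif_neg h] at hy
      exact absurd hy (Set.notMem_empty y)
  have hWfcov : ∀ y ∈ K, ∃ j, j < n ∧ y ∈ Wf j := by
    intro y hy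
    obtain ⟨x, hx, hyx⟩ := Set.mem_iUnion₂.mp (ht hy)
    have : x ∈ L := Finset.mem_toList.mpr hx
    obtain ⟨j, rfl⟩ := List.mem_iff_get.mp this
    refine ⟨j, j.isLt, ?_⟩
    simp only [hWf]
    rw [dif_pos j.isLt]
    exact hyx
  set G : ℕ → Set X := greedy ⇑σ p K Wf with hG
  have hGcl : ∀ j, IsClopen (G j) := greedy_clopen σ p hKcl hWfcl
  have hGsub : ∀ j, G j ⊆ K := fun j => (greedy_subset _ _ _ _ j).trans Set.inter_subset_right
  refine ⟨⋃ j ∈ Finset.range n, G j, isClopen_biUnion_finset fun j _ => hGcl j,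
    Set.iUnion₂_subset fun j _ => hGsub j, ?_, ?_⟩
  · -- existence
    intro x hx
    obtain ⟨j, hjn, hxj⟩ := hWfcov x hx
    by_cases hexc : x ∈ ⋃ i ∈ Finset.range p, (⇑σ)^[i] ⁻¹' (⋃ l : Fin j, G l)
    · obtain ⟨i, hi, hxi⟩ := Set.mem_iUnion₂.mp hexc
      obtain ⟨l, hl⟩ := Set.mem_iUnion.mp hxi
      exact ⟨i, Finset.mem_range.mp hi,
        Set.mem_iUnion₂.mpr ⟨l, Finset.mem_range.mpr (l.isLt.trans hjn), hl⟩⟩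
    · refine ⟨0, hp.pos, ?_⟩
      simp only [Function.iterate_zero_apply]
      refine Set.mem_iUnion₂.mpr ⟨j, Finset.mem_range.mpr hjn, ?_⟩
      rw [hG, greedy_def]
      exact ⟨⟨hxj, hx⟩, hexc⟩
  · -- uniqueness
    intro x a b ha hb hVa hVb
    obtain ⟨j₁, hj₁, hGa⟩ := Set.mem_iUnion₂.mp hVa
    obtain ⟨j₂, hj₂, hGb⟩ := Set.mem_iUnion₂.mp hVb
    -- helper for the asymmetric case
    have key : ∀ a b j₁ j₂ : ℕ, a < p → b < p → j₁ < j₂ →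
        (⇑σ)^[a] x ∈ G j₁ → (⇑σ)^[b] x ∈ G j₂ → False := by
      intro a b j₁ j₂ ha hb hj hGa hGb
      rw [hG, greedy_def] at hGb
      refine hGb.2 (Set.mem_iUnion₂.mpr ⟨(a + (p - b)) % p, Finset.mem_range.mpr (Nat.mod_lt _ hp.pos), ?_⟩)
      refine Set.mem_preimage.mpr (Set.mem_iUnion.mpr ⟨⟨j₁, hj⟩, ?_⟩)
      have harith : ((a + (p - b)) % p + b) % p = a := by
        rw [Nat.mod_add_mod]
        have : a + (p - b) + b = a + p := by omega
        rw [this, Nat.add_mod_right, Nat.mod_eq_of_lt ha]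
      have : (⇑σ)^[(a + (p - b)) % p] ((⇑σ)^[b] x) = (⇑σ)^[a] x := by
        rw [← Function.iterate_add_apply, ← period_mod' hσ, harith]
      rw [this]
      exact hGa
    rcases lt_trichotomy j₁ j₂ with h | h | h
    · exact absurd (key a b j₁ j₂ ha hb h hGa hGb) not_false
    · subst h
      by_contra hne
      have hWa : (⇑σ)^[a] x ∈ Wf j₁ := ((greedy_subset _ _ _ _ j₁) hGa).1
      have hWb : (⇑σ)^[b] x ∈ Wf j₁ := ((greedy_subset _ _ _ _ j₁) hGb).1
      rcases Nat.lt_or_ge a b with hab | hab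
      · have : (⇑σ)^[b - a] ((⇑σ)^[a] x) = (⇑σ)^[b] x := by
          rw [← Function.iterate_add_apply]
          congr 1
          omega
        exact hWfgood j₁ _ hWa (b - a) (by omega) (by omega) (this ▸ hWb)
      · have hab' : b < a := by omega
        have : (⇑σ)^[a - b] ((⇑σ)^[b] x) = (⇑σ)^[a] x := by
          rw [← Function.iterate_add_apply]
          congr 1
          omega
        exact hWfgood j₁ _ hWb (a - b) (by omega) (by omega) (this ▸ hWa)
    · exact absurd (key b a j₂ j₁ hb ha h hGb hGa) not_false
lemma exists_clopen_compact_nbhd {O : Set X} (hO : IsOpen O) {x : X} (hx : x ∈ O) :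
    ∃ W : Set X, IsClopen W ∧ IsCompact W ∧ x ∈ W ∧ W ⊆ O := by
  obtain ⟨C, hCcpt, hxC, hCO⟩ := exists_compact_subset hO hx
  obtain ⟨V, hVcl, hxV, hVC⟩ :=
    (loc_compact_Haus_tot_disc_of_zero_dim.mem_nhds_iff).mp (isOpen_interior.mem_nhds hxC)
  exact ⟨V, hVcl, hCcpt.of_isClosed_subset hVcl.1 (hVC.trans interior_subset),
    hxV, (hVC.trans interior_subset).trans hCO⟩

lemma invariant_extension (σ : X ≃ₜ X) {p : ℕ} (hp : p.Prime) (hσ : ∀ x, (⇑σ)^[p] x = x)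
    {k : Type*} [AddCommMonoid k]
    (h : {x : X // σ x = x} → k) (hh : IsLocallyConstant h) (hhc : HasCompactSupport h) :
    ∃ f : X → k, IsLocallyConstant f ∧ HasCompactSupport f ∧ (∀ x, f (σ x) = f x) ∧
      ∀ x : {x : X // σ x = x}, f x.1 = h x := by
  classical
  -- support of h is compact
  have hsupcl : IsClopen (Function.support h) := isClopen_support hh
  have hsupcpt : IsCompact (Function.support h) :=
    hhc.of_isClosed_subset hsupcl.1 subset_closure
  set C : Set X := Subtype.val '' Function.support h with hC
  have hCcpt : IsCompact C := hsupcpt.image continuous_subtype_val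
  -- for each fixed point z, an invariant clopen compact nbhd on which h is constant
  have hM : ∀ z : {x : X // σ x = x}, ∃ M : Set X, IsClopen M ∧ IsCompact M ∧ (⇑σ ⁻¹' M = M) ∧ z.1 ∈ M ∧
      ∀ y : {x : X // σ x = x}, y.1 ∈ M → h y = h z := by
    intro z
    have hfib : IsOpen {w : {x : X // σ x = x} | h w = h z} := hh.isOpen_fiber (h z)
    obtain ⟨O, hO, hOeq⟩ := isOpen_induced_iff.mp hfib
    have hzO : z.1 ∈ O := by
      have : z ∈ {w : {x : X // σ x = x} | h w = h z} := rfl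
      rw [← hOeq] at this
      exact this
    obtain ⟨W, hWcl, hWcpt, hzW, hWO⟩ := exists_clopen_compact_nbhd hO hzO
    refine ⟨⋂ i ∈ Finset.range p, (⇑σ)^[i] ⁻¹' W, ?_, ?_, ?_, ?_, ?_⟩
    · exact isClopen_biInter_finset fun i _ =>
        hWcl.preimage (iterate_continuous' σ.continuous i)
    · refine hWcpt.of_isClosed_subset
        (isClopen_biInter_finset fun i _ =>
          hWcl.preimage (iterate_continuous' σ.continuous i)).1 ?_
      intro y hy
      have := Set.mem_iInter₂.mp hy 0 (Finset.mem_range.mpr hp.pos)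
      simpa using this
    · exact inter_sat_inv hp.pos hσ W
    · refine Set.mem_iInter₂.mpr fun i _ => ?_
      simp only [Set.mem_preimage]
      rw [Function.iterate_fixed z.2 i]
      exact hzW
    · intro y hy
      have := Set.mem_iInter₂.mp hy 0 (Finset.mem_range.mpr hp.pos)
      simp only [Function.iterate_zero_apply, Set.mem_preimage] at this
      have : y ∈ Subtype.val ⁻¹' O := hWO this
      rw [hOeq] at this
      exact this
  choose M hMcl hMcpt hMinv hMmem hMval using hM
  -- finite subcover of C
  have hcov : C ⊆ ⋃ z : {x : X // σ x = x}, M z := by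
    rintro c ⟨z, _, rfl⟩
    exact Set.mem_iUnion.mpr ⟨z, hMmem z⟩
  obtain ⟨t, ht⟩ := hCcpt.elim_finite_subcover M (fun z => (hMcl z).2) hcov
  set L := t.toList with hL
  set n := L.length with hn
  set Mf : ℕ → Set X := fun j => if hj : j < n then M (L.get ⟨j, hj⟩) else ∅ with hMf
  set cf : ℕ → k := fun j => if hj : j < n then h (L.get ⟨j, hj⟩) else 0 with hcf
  have hMfcl : ∀ j, IsClopen (Mf j) := by
    intro j; simp only [hMf]; split
    · exact hMcl _
    · exact isClopen_empty
  have hMfcpt : ∀ j, IsCompact (Mf j) := by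
    intro j; simp only [hMf]; split
    · exact hMcpt _
    · exact isCompact_empty
  have hMfinv : ∀ j, ⇑σ ⁻¹' Mf j = Mf j := by
    intro j; simp only [hMf]; split
    · exact hMinv _
    · simp
  have hMfval : ∀ j, ∀ y : {x : X // σ x = x}, y.1 ∈ Mf j → h y = cf j := by
    intro j y hy
    simp only [hMf] at hy
    simp only [hcf]
    split at hy
    · rw [dif_pos ‹j < n›]
      exact hMval _ y hy
    · exact absurd hy (Set.notMem_empty _)
  have hMfcov : ∀ y : {x : X // σ x = x}, h y ≠ 0 → ∃ j, j < n ∧ y.1 ∈ Mf j := by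
    intro y hy
    have : y.1 ∈ C := ⟨y, hy, rfl⟩
    obtain ⟨z, hz, hyz⟩ := Set.mem_iUnion₂.mp (ht this)
    obtain ⟨j, rfl⟩ := List.mem_iff_get.mp (Finset.mem_toList.mpr hz)
    refine ⟨j, j.isLt, ?_⟩
    simp only [hMf]
    rw [dif_pos j.isLt]
    exact hyz
  -- the extension
  set D : ℕ → Set X := fun j => Mf j \ ⋃ l ∈ Finset.range j, Mf l with hD
  have hDcl : ∀ j, IsClopen (D j) :=
    fun j => (hMfcl j).diff (isClopen_biUnion_finset fun l _ => hMfcl l)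
  have hDinv : ∀ j x, σ x ∈ D j ↔ x ∈ D j := by
    intro j x
    simp only [hD, Set.mem_diff, Set.mem_iUnion]
    rw [inv_preimage_iff (hMfinv j)]
    constructor
    · rintro ⟨h1, h2⟩
      exact ⟨h1, fun ⟨l, hl, hml⟩ => h2 ⟨l, hl, (inv_preimage_iff (hMfinv l) x).mpr hml⟩⟩
    · rintro ⟨h1, h2⟩
      exact ⟨h1, fun ⟨l, hl, hml⟩ => h2 ⟨l, hl, (inv_preimage_iff (hMfinv l) x).mp hml⟩⟩
  set f : X → k := fun y => ∑ j ∈ Finset.range n, Set.indicator (D j) (fun _ => cf j) y with hf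
  refine ⟨f, ?_, ?_, ?_, ?_⟩
  · exact isLocallyConstant_sum _ _ fun j _ =>
      isLocallyConstant_indicator (hDcl j) (IsLocallyConstant.const _)
  · refine HasCompactSupport.intro (isCompact_iUnion (fun j : Finset.range n => hMfcpt j.1)) ?_
    intro y hy
    simp only [hf]
    refine Finset.sum_eq_zero fun j hj => ?_
    refine Set.indicator_of_notMem (fun hyD => hy ?_) _
    exact Set.mem_iUnion.mpr ⟨⟨j, hj⟩, hyD.1⟩
  · intro x
    simp only [hf]
    refine Finset.sum_congr rfl fun j _ => ?_
    by_cases hx : x ∈ D j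
    · rw [Set.indicator_of_mem hx, Set.indicator_of_mem ((hDinv j x).mpr hx)]
    · rw [Set.indicator_of_notMem hx, Set.indicator_of_notMem (fun hc => hx ((hDinv j x).mp hc))]
  · intro x
    by_cases hx : ∃ j, j < n ∧ x.1 ∈ Mf j
    · have hex : ∃ j, x.1 ∈ Mf j ∧ j < n := ⟨hx.choose, hx.choose_spec.2, hx.choose_spec.1⟩
      set j₀ := Nat.find (⟨hx.choose, hx.choose_spec.2⟩ : ∃ j, x.1 ∈ Mf j) with hj₀
      have hj₀mem : x.1 ∈ Mf j₀ := Nat.find_spec (⟨hx.choose, hx.choose_spec.2⟩ : ∃ j, x.1 ∈ Mf j)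
      have hj₀min : ∀ l < j₀, x.1 ∉ Mf l := fun l hl => Nat.find_min _ hl
      have hj₀lt : j₀ < n := by
        by_contra hcon
        have : Mf j₀ = ∅ := by simp only [hMf]; rw [dif_neg (by omega)]
        rw [this] at hj₀mem
        exact hj₀mem
      have hxD : x.1 ∈ D j₀ := by
        refine ⟨hj₀mem, fun hc => ?_⟩
        obtain ⟨l, hl, hml⟩ := Set.mem_iUnion₂.mp hc
        exact hj₀min l (Finset.mem_range.mp hl) hml
      have : f x.1 = cf j₀ := by
        simp only [hf]
        rw [Finset.sum_eq_single j₀]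
        · rw [Set.indicator_of_mem hxD]
        · intro b hb hne
          refine Set.indicator_of_notMem (fun hbD => ?_) _
          rcases Nat.lt_or_ge b j₀ with hlt | hge
          · exact hj₀min b hlt hbD.1
          · exact hbD.2 (Set.mem_iUnion₂.mpr ⟨j₀, Finset.mem_range.mpr (by omega), hj₀mem⟩)
        · intro hcon
          exact absurd (Finset.mem_range.mpr hj₀lt) hcon
      rw [this]
      exact (hMfval j₀ x hj₀mem).symm
    · have hfx : f x.1 = 0 := by
        simp only [hf]
        refine Finset.sum_eq_zero fun j hj => ?_
        refine Set.indicator_of_notMem (fun hxD => ?_) _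
        exact hx ⟨j, Finset.mem_range.mp hj, hxD.1⟩
      rw [hfx]
      by_contra hne
      obtain ⟨j, hj, hmj⟩ := hMfcov x (fun h0 => hne (by rw [h0]))
      exact hx ⟨j, hj, hmj⟩
end TateAux
/--
Let `p` be a prime, `k` a field of characteristic `p`, `X` a locally compact Hausdorff
totally disconnected space and `σ : X ≃ₜ X` with `σ^p = id`.  The space `C_c^∞(X;k)` of
locally constant compactly supported functions carries the action `f ↦ f ∘ σ`, with
norm `N f = ∑_{i<p} f ∘ σ^i`.  For `i = 0, 1`, restriction of functions to the fixed-point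
set `X^σ` descends to a `k`-linear isomorphism `T^i(C_c^∞(X;k)) ≅ C_c^∞(X^σ;k)`; this is
expressed below as: restriction lands in `C_c^∞(X^σ;k)`, kills the image of the relevant
"boundary" operator, and the induced maps on `T⁰ = ker(1-σ)/im N` and `T¹ = ker N/im(1-σ)`
are injective and surjective.
-/
theorem tate_ccInfty_field
    (p : ℕ) (hp : p.Prime)
    (k : Type*) [Field k] (hk : CharP k p)
    (X : Type*) [TopologicalSpace X] [LocallyCompactSpace X] [T2Space X]
    [TotallyDisconnectedSpace X]
    (σ : X ≃ₜ X) (hσ : ∀ x, (⇑σ)^[p] x = x) :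
    -- restriction to the fixed-point set lands in C_c^∞(X^σ; k)
    ((∀ f : X → k, IsLocallyConstant f → HasCompactSupport f →
        IsLocallyConstant (fun x : {x : X // σ x = x} => f x.1) ∧
        HasCompactSupport (fun x : {x : X // σ x = x} => f x.1))
    -- T⁰: restriction kills the image of the norm map
    ∧ (∀ g : X → k, IsLocallyConstant g → HasCompactSupport g →
        ∀ x : X, σ x = x → (∑ i ∈ Finset.range p, g ((⇑σ)^[i] x)) = 0)
    -- T⁰: injectivity of the descended map
    ∧ (∀ f : X → k, IsLocallyConstant f → HasCompactSupport f →
        (∀ x, f (σ x) = f x) → (∀ x : X, σ x = x → f x = 0) →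
        ∃ g : X → k, IsLocallyConstant g ∧ HasCompactSupport g ∧
          ∀ x, f x = ∑ i ∈ Finset.range p, g ((⇑σ)^[i] x))
    -- T⁰: surjectivity of the descended map
    ∧ (∀ h : {x : X // σ x = x} → k, IsLocallyConstant h → HasCompactSupport h →
        ∃ f : X → k, IsLocallyConstant f ∧ HasCompactSupport f ∧
          (∀ x, f (σ x) = f x) ∧ ∀ x : {x : X // σ x = x}, f x.1 = h x)
    -- T¹: restriction kills the image of 1 - σ
    ∧ (∀ g : X → k, IsLocallyConstant g → HasCompactSupport g →
        ∀ x : X, σ x = x → g x - g (σ x) = 0)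
    -- T¹: injectivity of the descended map
    ∧ (∀ f : X → k, IsLocallyConstant f → HasCompactSupport f →
        (∀ x, (∑ i ∈ Finset.range p, f ((⇑σ)^[i] x)) = 0) →
        (∀ x : X, σ x = x → f x = 0) →
        ∃ g : X → k, IsLocallyConstant g ∧ HasCompactSupport g ∧
          ∀ x, f x = g x - g (σ x))
    -- T¹: surjectivity of the descended map
    ∧ (∀ h : {x : X // σ x = x} → k, IsLocallyConstant h → HasCompactSupport h →
        ∃ f : X → k, IsLocallyConstant f ∧ HasCompactSupport f ∧
          (∀ x, (∑ i ∈ Finset.range p, f ((⇑σ)^[i] x)) = 0) ∧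
          ∀ x : {x : X // σ x = x}, f x.1 = h x)) := by
  classical
  haveI := hk
  have hfix : ∀ (x : X), σ x = x → ∀ i, (⇑σ)^[i] x = x :=
    fun x hx i => Function.iterate_fixed hx i
  refine ⟨?_, ?_, ?_, ?_, ?_, ?_, ?_⟩
  · -- C1 : restriction
    intro f hf hfc
    constructor
    · exact hf.comp_continuous continuous_subtype_val
    · have hsupcl := TateAux.isClopen_support hf
      have hsupcpt : IsCompact (Function.support f) :=
        hfc.of_isClosed_subset hsupcl.1 subset_closure
      have hA : IsCompact (Subtype.val ⁻¹' Function.support f : Set {x : X // σ x = x}) := by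
        rw [Topology.IsEmbedding.subtypeVal.isCompact_iff,
          Set.image_preimage_eq_inter_range, Subtype.range_coe_subtype]
        exact hsupcpt.inter_right (isClosed_eq σ.continuous continuous_id)
      refine HasCompactSupport.intro hA ?_
      intro x hx
      by_contra hne
      exact hx (Set.mem_preimage.mpr (Function.mem_support.mpr hne))
  · -- C2 : norm vanishes on fixed points
    intro g _ _ x hx
    rw [Finset.sum_congr rfl (fun i _ => by rw [hfix x hx i]), Finset.sum_const,
      Finset.card_range, nsmul_eq_mul, CharP.cast_eq_zero k p, zero_mul]
  · -- C3 : T⁰ injectivity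
    intro f hf hfc hinv hzero
    have hfiter : ∀ i (x : X), f ((⇑σ)^[i] x) = f x := by
      intro i
      induction i with
      | zero => intro x; simp
      | succ n ih => intro x; rw [Function.iterate_succ_apply', hinv, ih]
    have hsupcl := TateAux.isClopen_support hf
    have hsupcpt : IsCompact (Function.support f) :=
      hfc.of_isClosed_subset hsupcl.1 subset_closure
    have hsupinv : ⇑σ ⁻¹' Function.support f = Function.support f := by
      ext y
      simp only [Set.mem_preimage, Function.mem_support]
      rw [hinv y]
    have hfree : ∀ x ∈ Function.support f, σ x ≠ x := fun x hx hc => hx (hzero x hc)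
    obtain ⟨V, hVcl, hVsub, hVex, hVuniq⟩ :=
      TateAux.fund_domain σ hp hσ hsupcl hsupcpt hsupinv hfree
    refine ⟨Set.indicator V f, TateAux.isLocallyConstant_indicator hVcl hf, ?_, ?_⟩
    · exact HasCompactSupport.intro (hsupcpt.of_isClosed_subset hVcl.1 hVsub)
        (fun x hx => Set.indicator_of_notMem hx f)
    · intro x
      by_cases hx : x ∈ Function.support f
      · obtain ⟨i₀, hi₀, hVi₀⟩ := hVex x hx
        have hsum : ∑ i ∈ Finset.range p, Set.indicator V f ((⇑σ)^[i] x) =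
            Set.indicator V f ((⇑σ)^[i₀] x) := by
          refine Finset.sum_eq_single i₀ (fun b hb hne => ?_)
            (fun hcon => absurd (Finset.mem_range.mpr hi₀) hcon)
          by_cases hbV : (⇑σ)^[b] x ∈ V
          · exact absurd (hVuniq x b i₀ (Finset.mem_range.mp hb) hi₀ hbV hVi₀) hne
          · exact Set.indicator_of_notMem hbV f
        rw [hsum, Set.indicator_of_mem hVi₀ f, hfiter]
      · have hx0 : f x = 0 := by
          by_contra hne
          exact hx (Function.mem_support.mpr hne)
        rw [hx0]
        symm
        refine Finset.sum_eq_zero fun i _ => ?_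
        refine Set.indicator_of_notMem (fun hc => ?_) f
        have hmem : (⇑σ)^[i] x ∈ Function.support f := hVsub hc
        rw [TateAux.inv_iterate_mem hsupinv] at hmem
        exact hx hmem
  · -- C4 : T⁰ surjectivity
    intro h hh hhc
    exact TateAux.invariant_extension σ hp hσ h hh hhc
  · -- C5 : 1 - σ vanishes on fixed points
    intro g _ _ x hx
    rw [hx, sub_self]
  · -- C6 : T¹ injectivity
    intro f hf hfc hN hzero
    have hsupcl := TateAux.isClopen_support hf
    have hsupcpt : IsCompact (Function.support f) :=
      hfc.of_isClosed_subset hsupcl.1 subset_closure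
    set K : Set X := ⋃ i ∈ Finset.range p, (⇑σ)^[i] ⁻¹' Function.support f with hK
    have hKcl : IsClopen K := isClopen_biUnion_finset fun i _ =>
      hsupcl.preimage (TateAux.iterate_continuous' σ.continuous i)
    have hKcpt : IsCompact K := (Finset.range p).isCompact_biUnion fun i _ =>
      TateAux.isCompact_preimage_iterate σ hsupcpt i
    have hKinv : ⇑σ ⁻¹' K = K := TateAux.union_sat_inv hp.pos hσ _
    have hsubK : Function.support f ⊆ K := fun y hy =>
      Set.mem_iUnion₂.mpr ⟨0, Finset.mem_range.mpr hp.pos, by simpa using hy⟩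
    have hfree : ∀ x ∈ K, σ x ≠ x := by
      intro x hx hc
      obtain ⟨i, _, hxi⟩ := Set.mem_iUnion₂.mp hx
      rw [Set.mem_preimage, hfix x hc i] at hxi
      exact hxi (hzero x hc)
    obtain ⟨V, hVcl, hVsub, hVex, hVuniq⟩ :=
      TateAux.fund_domain σ hp hσ hKcl hKcpt hKinv hfree
    have hVcpt : IsCompact V := hKcpt.of_isClosed_subset hVcl.1 hVsub
    set g : X → k := fun x => ∑ m ∈ Finset.range p,
      Set.indicator ((⇑σ)^[m] ⁻¹' V)
        (fun y => -(∑ j ∈ Finset.range (p - m), f ((⇑σ)^[j + m] y))) x with hg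
    have hgval : ∀ x : X, ∀ m₀, m₀ < p → (⇑σ)^[m₀] x ∈ V →
        g x = -(∑ j ∈ Finset.range (p - m₀), f ((⇑σ)^[j + m₀] x)) := by
      intro x m₀ hm₀ hxV
      simp only [hg]
      rw [Finset.sum_eq_single m₀]
      · rw [Set.indicator_of_mem (show x ∈ (⇑σ)^[m₀] ⁻¹' V from hxV)]
      · intro b hb hne
        exact Set.indicator_of_notMem
          (show x ∉ (⇑σ)^[b] ⁻¹' V from
            fun hc => hne (hVuniq x b m₀ (Finset.mem_range.mp hb) hm₀ hc hxV)) _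
      · intro hcon
        exact absurd (Finset.mem_range.mpr hm₀) hcon
    have hgzero : ∀ x : X, (∀ m, m < p → (⇑σ)^[m] x ∉ V) → g x = 0 := by
      intro x hx
      simp only [hg]
      exact Finset.sum_eq_zero fun m hm =>
        Set.indicator_of_notMem (show x ∉ (⇑σ)^[m] ⁻¹' V from hx m (Finset.mem_range.mp hm)) _
    refine ⟨g, ?_, ?_, ?_⟩
    · refine TateAux.isLocallyConstant_sum _ _ fun m _ => ?_
      refine TateAux.isLocallyConstant_indicator
        (hVcl.preimage (TateAux.iterate_continuous' σ.continuous m)) ?_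
      exact IsLocallyConstant.neg (TateAux.isLocallyConstant_sum _ _ fun j _ =>
        hf.comp_continuous (TateAux.iterate_continuous' σ.continuous (j + m)))
    · refine HasCompactSupport.intro
        ((Finset.range p).isCompact_biUnion fun m _ =>
          TateAux.isCompact_preimage_iterate σ hVcpt m) ?_
      intro x hx
      exact hgzero x fun m hm hc =>
        hx (Set.mem_iUnion₂.mpr ⟨m, Finset.mem_range.mpr hm, hc⟩)
    · intro x
      by_cases hx : ∃ m, m < p ∧ (⇑σ)^[m] x ∈ V
      · obtain ⟨m₀, hm₀, hV₀⟩ := hx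
        rcases Nat.eq_zero_or_pos m₀ with rfl | hm₀pos
        · -- m₀ = 0
          have hgx : g x = 0 := by
            rw [hgval x 0 hp.pos hV₀]
            have : (∑ j ∈ Finset.range (p - 0), f ((⇑σ)^[j + 0] x)) = 0 := by
              simpa using hN x
            rw [this, neg_zero]
          have hVσ : (⇑σ)^[p - 1] (σ x) ∈ V := by
            rw [← Function.iterate_succ_apply, show (p - 1).succ = p from by omega, hσ x]
            simpa using hV₀
          have hgσx : g (σ x) = -(f x) := by
            rw [hgval (σ x) (p - 1) (by omega) hVσ]
            rw [show p - (p - 1) = 1 from by omega, Finset.sum_range_one]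
            rw [show (0 : ℕ) + (p - 1) = p - 1 from by omega]
            rw [← Function.iterate_succ_apply, show (p - 1).succ = p from by omega, hσ x]
          rw [hgx, hgσx]
          ring
        · -- m₀ ≥ 1
          have hVσ : (⇑σ)^[m₀ - 1] (σ x) ∈ V := by
            rw [← Function.iterate_succ_apply, show (m₀ - 1).succ = m₀ from by omega]
            exact hV₀
          have hgx := hgval x m₀ hm₀ hV₀
          have hgσx : g (σ x) =
              -((∑ j ∈ Finset.range (p - m₀), f ((⇑σ)^[j + m₀] x)) + f x) := by
            rw [hgval (σ x) (m₀ - 1) (by omega) hVσ]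
            have hrw : ∀ j, f ((⇑σ)^[j + (m₀ - 1)] (σ x)) = f ((⇑σ)^[j + m₀] x) := by
              intro j
              rw [← Function.iterate_succ_apply, show (j + (m₀ - 1)).succ = j + m₀ from by omega]
            rw [show p - (m₀ - 1) = (p - m₀) + 1 from by omega, Finset.sum_range_succ]
            rw [Finset.sum_congr rfl fun j _ => hrw j, hrw (p - m₀)]
            rw [show p - m₀ + m₀ = p from by omega, hσ x]
          rw [hgx, hgσx]
          ring
      · push_neg at hx
        have hgx : g x = 0 := hgzero x hx
        have hgσx : g (σ x) = 0 := by
          refine hgzero (σ x) fun m hm hc => ?_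
          rw [← Function.iterate_succ_apply] at hc
          rw [← TateAux.period_mod' hσ (m + 1) x] at hc
          exact hx ((m + 1) % p) (Nat.mod_lt _ hp.pos) hc
        have hfx : f x = 0 := by
          by_contra hne
          obtain ⟨i, hi, hiV⟩ := hVex x (hsubK (Function.mem_support.mpr hne))
          exact hx i hi hiV
        rw [hgx, hgσx, hfx, sub_zero]
  · -- C7 : T¹ surjectivity
    intro h hh hhc
    obtain ⟨f, h1, h2, h3, h4⟩ := TateAux.invariant_extension σ hp hσ h hh hhc
    have hfiter : ∀ i (x : X), f ((⇑σ)^[i] x) = f x := by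
      intro i
      induction i with
      | zero => intro x; simp
      | succ n ih => intro x; rw [Function.iterate_succ_apply', h3, ih]
    refine ⟨f, h1, h2, ?_, h4⟩
    intro x
    rw [Finset.sum_congr rfl (fun i _ => hfiter i x), Finset.sum_const,
      Finset.card_range, nsmul_eq_mul, CharP.cast_eq_zero k p, zero_mul]
end

section
/- Let p be a prime, X a compact Hausdorff totally disconnected topological space, and σ : X → X a homeomorphism with σ^p = id and with no fixed points (σ(x) ≠ x for all x ∈ X; since p is prime, every ⟨σ⟩-orbit then has exactly p elements). Then there exists a clopen subset F ⊆ X such that X is the disjoint union of the sets F, σ(F), σ²(F), …, σ^{p−1}(F). -/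
open Set Function

section Aux

variable {X : Type*} [TopologicalSpace X]

/-- The union of the first `p` iterated images of `S` under `σ`. -/
private def orbN (p : ℕ) (σ : X ≃ₜ X) (S : Set X) : Set X :=
  ⋃ i ∈ Finset.range p, (⇑σ)^[i] '' S

/-- Greedy construction of a fundamental domain from a list of good clopen sets. -/
private def buildF (p : ℕ) (σ : X ≃ₜ X) : List (Set X) → Set X
  | [] => ∅
  | U :: L => (U \ orbN p σ (⋃ V ∈ L, V)) ∪ buildF p σ L

private lemma iterate_mul_p (p : ℕ) (σ : X ≃ₜ X) (hσ : ∀ x, (⇑σ)^[p] x = x)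
    (q : ℕ) (x : X) : (⇑σ)^[p * q] x = x := by
  induction q with
  | zero => simp
  | succ q ih => rw [Nat.mul_succ, Function.iterate_add_apply, hσ, ih]

private lemma iterate_mod (p : ℕ) (σ : X ≃ₜ X) (hσ : ∀ x, (⇑σ)^[p] x = x)
    (n : ℕ) (x : X) : (⇑σ)^[n] x = (⇑σ)^[n % p] x := by
  conv_lhs => rw [← Nat.mod_add_div n p, Function.iterate_add_apply,
    iterate_mul_p p σ hσ _ x]

private lemma iter_inv (p : ℕ) (σ : X ≃ₜ X) (hσ : ∀ x, (⇑σ)^[p] x = x)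
    {k : ℕ} (hk : k ≤ p) (y : X) : (⇑σ)^[(p - k) % p] ((⇑σ)^[k] y) = y := by
  rw [← Function.iterate_add_apply, iterate_mod p σ hσ, Nat.mod_add_mod,
    Nat.sub_add_cancel hk, Nat.mod_self]
  rfl

private lemma mem_orbN_iff (p : ℕ) (σ : X ≃ₜ X) (hp : 0 < p)
    (hσ : ∀ x, (⇑σ)^[p] x = x) {S : Set X} {x : X} :
    x ∈ orbN p σ S ↔ ∃ k < p, (⇑σ)^[k] x ∈ S := by
  constructor
  · intro h
    simp only [orbN, Set.mem_iUnion, Finset.mem_range] at h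
    obtain ⟨i, hi, s, hs, rfl⟩ := h
    exact ⟨(p - i) % p, Nat.mod_lt _ hp, by rwa [iter_inv p σ hσ hi.le]⟩
  · rintro ⟨k, hk, hs⟩
    simp only [orbN, Set.mem_iUnion, Finset.mem_range]
    exact ⟨(p - k) % p, Nat.mod_lt _ hp, (⇑σ)^[k] x, hs, iter_inv p σ hσ hk.le x⟩

private lemma isClopen_iterate_image (σ : X ≃ₜ X) (n : ℕ) {S : Set X}
    (hS : IsClopen S) : IsClopen ((⇑σ)^[n] '' S) := by
  induction n with
  | zero => simpa using hS
  | succ n ih =>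
    rw [Function.iterate_succ', Set.image_comp]
    have himg : ⇑σ '' ((⇑σ)^[n] '' S) = ⇑σ.symm ⁻¹' ((⇑σ)^[n] '' S) := by
      ext z
      constructor
      · rintro ⟨w, hw, rfl⟩
        simpa [σ.symm_apply_apply] using hw
      · intro hz
        exact ⟨σ.symm z, hz, σ.apply_symm_apply z⟩
    rw [himg]
    exact ih.preimage σ.symm.continuous

private lemma isClopen_orbN (p : ℕ) (σ : X ≃ₜ X) {S : Set X} (hS : IsClopen S) :
    IsClopen (orbN p σ S) :=
  isClopen_biUnion_finset fun i _ => isClopen_iterate_image σ i hS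

omit [TopologicalSpace X] in
private lemma unionList_cons (U : Set X) (L : List (Set X)) :
    (⋃ V ∈ (U :: L), V) = U ∪ ⋃ V ∈ L, V := by
  ext x
  simp only [Set.mem_iUnion, List.mem_cons, Set.mem_union]
  constructor
  · rintro ⟨V, (rfl | hV), hx⟩
    · exact Or.inl hx
    · exact Or.inr ⟨V, hV, hx⟩
  · rintro (hx | ⟨V, hV, hx⟩)
    · exact ⟨U, Or.inl rfl, hx⟩
    · exact ⟨V, Or.inr hV, hx⟩

private lemma isClopen_unionList (L : List (Set X)) (h : ∀ U ∈ L, IsClopen U) :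
    IsClopen (⋃ V ∈ L, V) := by
  induction L with
  | nil => simpa using isClopen_empty
  | cons U L ih =>
    rw [unionList_cons]
    exact (h U (List.mem_cons_self)).union
      (ih fun V hV => h V (List.mem_cons_of_mem U hV))

private lemma buildF_subset (p : ℕ) (σ : X ≃ₜ X) (L : List (Set X)) :
    buildF p σ L ⊆ ⋃ V ∈ L, V := by
  induction L with
  | nil => simp [buildF]
  | cons U L ih =>
    rw [unionList_cons]
    rintro x (hx | hx)
    · exact Or.inl hx.1
    · exact Or.inr (ih hx)

private lemma isClopen_buildF (p : ℕ) (σ : X ≃ₜ X) (L : List (Set X))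
    (h : ∀ U ∈ L, IsClopen U) : IsClopen (buildF p σ L) := by
  induction L with
  | nil => simpa [buildF] using isClopen_empty
  | cons U L ih =>
    refine (((h U (List.mem_cons_self)).diff
      (isClopen_orbN p σ (isClopen_unionList L
        fun V hV => h V (List.mem_cons_of_mem U hV)))).union
      (ih fun V hV => h V (List.mem_cons_of_mem U hV)))

private lemma buildF_disj (p : ℕ) (σ : X ≃ₜ X) (hp : 0 < p)
    (hσ : ∀ x, (⇑σ)^[p] x = x) (L : List (Set X))
    (hgood : ∀ U ∈ L, ∀ m, 0 < m → m < p → ∀ x ∈ U, (⇑σ)^[m] x ∉ U) :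
    ∀ m, 0 < m → m < p → ∀ x ∈ buildF p σ L, (⇑σ)^[m] x ∉ buildF p σ L := by
  induction L with
  | nil => simp [buildF]
  | cons U L ih =>
    intro m hm0 hmp x hx hy
    have hgU := hgood U (List.mem_cons_self)
    have hgL : ∀ V ∈ L, ∀ m, 0 < m → m < p → ∀ x ∈ V, (⇑σ)^[m] x ∉ V :=
      fun V hV => hgood V (List.mem_cons_of_mem U hV)
    rcases hx with hx | hx <;> rcases hy with hy | hy
    · exact hgU m hm0 hmp x hx.1 hy.1
    · -- x ∈ U \ orb, σ^[m] x ∈ buildF L ⊆ ⋃ L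
      exact hx.2 ((mem_orbN_iff p σ hp hσ).mpr
        ⟨m, hmp, buildF_subset p σ L hy⟩)
    · -- x ∈ buildF L ⊆ ⋃ L, σ^[m] x ∈ U \ orb
      refine hy.2 ((mem_orbN_iff p σ hp hσ).mpr ⟨(p - m) % p, Nat.mod_lt _ hp, ?_⟩)
      rw [iter_inv p σ hσ hmp.le]
      exact buildF_subset p σ L hx
    · exact ih hgL m hm0 hmp x hx hy

private lemma buildF_cover (p : ℕ) (σ : X ≃ₜ X) (hp : 0 < p)
    (hσ : ∀ x, (⇑σ)^[p] x = x) (L : List (Set X)) :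
    ∀ x, (∃ k < p, (⇑σ)^[k] x ∈ ⋃ V ∈ L, V) →
      ∃ k < p, (⇑σ)^[k] x ∈ buildF p σ L := by
  induction L with
  | nil => simp
  | cons U L ih =>
    rintro x ⟨k, hk, hmem⟩
    rw [unionList_cons] at hmem
    by_cases h : ∃ j < p, (⇑σ)^[j] x ∈ ⋃ V ∈ L, V
    · obtain ⟨j, hj, hjm⟩ := ih x h
      exact ⟨j, hj, Or.inr hjm⟩
    · rcases hmem with hU | hT
      · refine ⟨k, hk, Or.inl ⟨hU, fun horb => ?_⟩⟩
        obtain ⟨j, hj, hjm⟩ := (mem_orbN_iff p σ hp hσ).mp horb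
        rw [← Function.iterate_add_apply] at hjm
        rw [iterate_mod p σ hσ] at hjm
        exact h ⟨(j + k) % p, Nat.mod_lt _ hp, hjm⟩
      · exact absurd ⟨k, hk, hT⟩ h

end Aux

/--
Let `p` be a prime, `X` a compact Hausdorff totally disconnected space, and `σ : X ≃ₜ X`
a homeomorphism with `σ^p = id` and no fixed points.  Then there is a clopen fundamental
domain `F ⊆ X`: the translates `σ^i(F)`, `0 ≤ i < p`, are pairwise disjoint and cover `X`.
-/
theorem exists_clopen_fundamental_domain
    (p : ℕ) (hp : p.Prime)
    (X : Type*) [TopologicalSpace X] [CompactSpace X] [T2Space X]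
    [TotallyDisconnectedSpace X]
    (σ : X ≃ₜ X) (hσ : ∀ x, (⇑σ)^[p] x = x) (hfree : ∀ x : X, σ x ≠ x) :
    ∃ F : Set X, IsClopen F ∧
      (∀ i j : ℕ, i < p → j < p → i ≠ j →
        Disjoint ((⇑σ)^[i] '' F) ((⇑σ)^[j] '' F)) ∧
      (⋃ i ∈ Finset.range p, (⇑σ)^[i] '' F) = Set.univ := by
  classical
  have hp0 : 0 < p := hp.pos
  haveI : TotallySeparatedSpace X := loc_compact_t2_tot_disc_iff_tot_sep.mp ‹_›
  -- every point is moved by σ^[m] for 0 < m < p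
  have hdist : ∀ (x : X) (m : ℕ), 0 < m → m < p → (⇑σ)^[m] x ≠ x := by
    intro x m hm0 hmp heq
    have h1 : Function.IsPeriodicPt (⇑σ) m x := heq
    have h2 : Function.IsPeriodicPt (⇑σ) p x := hσ x
    have hg : Nat.gcd p m = 1 :=
      (Nat.Prime.coprime_iff_not_dvd hp).mpr
        (fun hd => absurd (Nat.le_of_dvd hm0 hd) (not_le.2 hmp))
    have h3 : Function.IsPeriodicPt (⇑σ) 1 x := hg ▸ h2.gcd h1
    exact hfree x h3
  -- for each x, a good clopen neighborhood
  have hU : ∀ x : X, ∃ U : Set X, IsClopen U ∧ x ∈ U ∧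
      ∀ m, 0 < m → m < p → ∀ y ∈ U, (⇑σ)^[m] y ∉ U := by
    intro x
    have hW : ∀ m : ℕ, ∃ W : Set X, IsClopen W ∧ x ∈ W ∧
        (0 < m → m < p → (⇑σ)^[m] x ∉ W) := by
      intro m
      by_cases hm : 0 < m ∧ m < p
      · obtain ⟨W, hW, hxW, hyW⟩ :=
          exists_isClopen_of_totally_separated (Ne.symm (hdist x m hm.1 hm.2))
        exact ⟨W, hW, hxW, fun _ _ => hyW⟩
      · exact ⟨Set.univ, isClopen_univ, trivial, fun h1 h2 => absurd ⟨h1, h2⟩ hm⟩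
    choose W hWc hWx hWm using hW
    set V : Set X := ⋂ m ∈ Finset.Ioo 0 p, W m with hV
    have hVc : IsClopen V := isClopen_biInter_finset fun m _ => hWc m
    have hVx : x ∈ V := Set.mem_iInter₂.mpr fun m _ => hWx m
    have hVm : ∀ m, 0 < m → m < p → (⇑σ)^[m] x ∉ V := by
      intro m hm0 hmp hmem
      exact hWm m hm0 hmp (Set.mem_iInter₂.mp hmem m (Finset.mem_Ioo.mpr ⟨hm0, hmp⟩))
    refine ⟨V \ ⋃ m ∈ Finset.Ioo 0 p, (⇑σ)^[m] ⁻¹' V, ?_, ?_, ?_⟩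
    · exact hVc.diff (isClopen_biUnion_finset fun m _ =>
        hVc.preimage (σ.continuous.iterate m))
    · refine ⟨hVx, fun hmem => ?_⟩
      simp only [Set.mem_iUnion, Finset.mem_Ioo, Set.mem_preimage] at hmem
      obtain ⟨m, ⟨hm0, hmp⟩, hm⟩ := hmem
      exact hVm m hm0 hmp hm
    · intro m hm0 hmp y hy hy'
      refine hy.2 ?_
      simp only [Set.mem_iUnion, Finset.mem_Ioo, Set.mem_preimage]
      exact ⟨m, ⟨hm0, hmp⟩, hy'.1⟩
  choose U hUc hUx hUg using hU
  -- finite subcover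
  obtain ⟨t, ht⟩ := isCompact_univ.elim_finite_subcover U
    (fun x => (hUc x).isOpen) (fun y _ => Set.mem_iUnion.2 ⟨y, hUx y⟩)
  set L : List (Set X) := t.toList.map U with hL
  have hmemL : ∀ S ∈ L, ∃ x, S = U x := by
    intro S hS
    simp only [hL, List.mem_map] at hS
    obtain ⟨x, _, rfl⟩ := hS
    exact ⟨x, rfl⟩
  have hLclopen : ∀ S ∈ L, IsClopen S := by
    intro S hS; obtain ⟨x, rfl⟩ := hmemL S hS; exact hUc x
  have hLgood : ∀ S ∈ L, ∀ m, 0 < m → m < p → ∀ y ∈ S, (⇑σ)^[m] y ∉ S := by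
    intro S hS; obtain ⟨x, rfl⟩ := hmemL S hS; exact hUg x
  set F : Set X := buildF p σ L with hF
  have hdisj := buildF_disj p σ hp0 hσ L hLgood
  refine ⟨F, isClopen_buildF p σ L hLclopen, ?_, ?_⟩
  · -- pairwise disjointness
    have key : ∀ i j : ℕ, i < j → j < p →
        Disjoint ((⇑σ)^[i] '' F) ((⇑σ)^[j] '' F) := by
      intro i j hij hjp
      rw [Set.disjoint_left]
      rintro z ⟨a, ha, rfl⟩ ⟨b, hb, hab⟩
      -- σ^[j] b = σ^[i] a; apply σ^[p-j]
      have h1 : (⇑σ)^[p - j] ((⇑σ)^[j] b) = b := by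
        rw [← Function.iterate_add_apply, Nat.sub_add_cancel hjp.le, hσ]
      have h2 : (⇑σ)^[(p - j) + i] a = b := by
        rw [Function.iterate_add_apply, ← hab, h1]
      have hm0 : 0 < (p - j) + i := by omega
      have hmp : (p - j) + i < p := by omega
      exact hdisj _ hm0 hmp a ha (h2 ▸ hb)
    intro i j hi hj hne
    rcases hne.lt_or_gt with h | h
    · exact key i j h hj
    · exact (key j i h hi).symm
  · -- coverage
    rw [Set.eq_univ_iff_forall]
    intro y
    have hyL : y ∈ ⋃ V ∈ L, V := by
      have := ht (Set.mem_univ y)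
      simp only [Set.mem_iUnion] at this
      obtain ⟨x, hx, hxy⟩ := this
      simp only [Set.mem_iUnion]
      refine ⟨U x, ?_, hxy⟩
      simp only [hL, List.mem_map, Finset.mem_toList]
      exact ⟨x, hx, rfl⟩
    obtain ⟨k, hk, hkF⟩ := buildF_cover p σ hp0 hσ L y ⟨0, hp0, by simpa using hyL⟩
    simp only [Set.mem_iUnion, Finset.mem_range]
    exact ⟨(p - k) % p, Nat.mod_lt _ hp0, (⇑σ)^[k] y, hkF, iter_inv p σ hσ hk.le y⟩
end

section
/- Let p be a prime, A a commutative ring, and σ a ring automorphism of A with σ^p = id. Then: (1) the image N(A) of the norm map is an ideal of the fixed subring A^σ; and (2) the map A → A^σ/N(A) sending a to the class of the product σ^0(a)·σ^1(a)·…·σ^{p−1}(a) is a ring homomorphism. -/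
open Finset


/-- The fixed subring `A^σ` of a ring automorphism `σ` of a commutative ring `A`. -/
def fixedSubring {A : Type*} [CommRing A] (σ : A ≃+* A) : Subring A where
  carrier := {a : A | σ a = a}
  zero_mem' := map_zero σ
  one_mem' := map_one σ
  add_mem' := fun {a b} ha hb => by
    simp only [Set.mem_setOf_eq] at *
    rw [map_add, ha, hb]
  mul_mem' := fun {a b} ha hb => by
    simp only [Set.mem_setOf_eq] at *
    rw [map_mul, ha, hb]
  neg_mem' := fun {a} ha => by
    simp only [Set.mem_setOf_eq] at *
    rw [map_neg, ha]


section Aux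

variable {A : Type*} [CommRing A] (p : ℕ) (hp : p.Prime) (σ : A ≃+* A)
  (hσ : ∀ a, (⇑σ)^[p] a = a)

private lemma sigmaPow_apply (n : ℕ) (a : A) : (σ ^ n) a = (⇑σ)^[n] a := by
  induction n with
  | zero => rfl
  | succ n ih =>
    rw [pow_succ', Function.iterate_succ_apply']
    show σ ((σ ^ n) a) = _
    rw [ih]

include hσ in
private lemma sigma_pow_p : σ ^ p = 1 := by
  ext a
  rw [sigmaPow_apply, hσ]; rfl

variable [NeZero p]

/-- `τ i = σ ^ i.val` for `i : ZMod p`. -/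
private def tau (i : ZMod p) : A ≃+* A := σ ^ i.val

include hσ in
private lemma tau_add_one (i : ZMod p) (a : A) : tau p σ (i + 1) a = σ (tau p σ i a) := by
  have h1 : σ ^ p = 1 := sigma_pow_p p σ hσ
  have hval : (i + 1).val = (i.val + 1) % p := by
    rw [ZMod.val_add]
    conv_rhs => rw [Nat.add_mod]
    rw [Nat.mod_eq_of_lt (ZMod.val_lt i), ZMod.val_one_eq_one_mod]
  have heq : tau p σ (i + 1) = σ * tau p σ i := by
    show σ ^ (i + 1).val = σ * σ ^ i.val
    rw [hval, ← pow_eq_pow_mod _ h1, pow_succ']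
  rw [heq]
  rfl


private lemma sum_zmod (f : ℕ → A) : ∑ i ∈ range p, f i = ∑ i : ZMod p, f i.val := by
  refine Finset.sum_nbij' (fun n => (n : ZMod p)) (fun i => i.val) ?_ ?_ ?_ ?_ ?_
  · intro a _; exact Finset.mem_univ _
  · intro i _; exact Finset.mem_range.2 (ZMod.val_lt i)
  · intro a ha; exact ZMod.val_cast_of_lt (Finset.mem_range.1 ha)
  · intro i _; exact ZMod.natCast_rightInverse i
  · intro a ha; rw [ZMod.val_cast_of_lt (Finset.mem_range.1 ha)]

private lemma prod_zmod (f : ℕ → A) : ∏ i ∈ range p, f i = ∏ i : ZMod p, f i.val := by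
  refine Finset.prod_nbij' (fun n => (n : ZMod p)) (fun i => i.val) ?_ ?_ ?_ ?_ ?_
  · intro a _; exact Finset.mem_univ _
  · intro i _; exact Finset.mem_range.2 (ZMod.val_lt i)
  · intro a ha; exact ZMod.val_cast_of_lt (Finset.mem_range.1 ha)
  · intro i _; exact ZMod.natCast_rightInverse i
  · intro a ha; rw [ZMod.val_cast_of_lt (Finset.mem_range.1 ha)]

private def shiftS (t : Finset (ZMod p)) : Finset (ZMod p) := t.image (· + 1)

variable {p}

private lemma mem_shiftS {t : Finset (ZMod p)} {j : ZMod p} :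
    j ∈ shiftS p t ↔ j - 1 ∈ t := by
  simp only [shiftS, Finset.mem_image]
  constructor
  · rintro ⟨i, hi, rfl⟩; simpa using hi
  · intro h; exact ⟨j - 1, h, by ring⟩

private lemma shiftS_image (t : Finset (ZMod p)) (c : ZMod p) :
    shiftS p (t.image (· + c)) = t.image (· + (c + 1)) := by
  rw [shiftS, Finset.image_image]
  congr 1
  funext x
  show x + c + 1 = x + (c + 1)
  ring

private lemma shiftS_iterate (t : Finset (ZMod p)) (k : ℕ) :
    (shiftS p)^[k] t = t.image (· + (k : ZMod p)) := by
  induction k with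
  | zero => simp
  | succ k ih =>
    rw [Function.iterate_succ_apply', ih, shiftS_image]
    push_cast
    rfl

private lemma image_add_nsmul (t : Finset (ZMod p)) (c : ZMod p)
    (h : t.image (· + c) = t) : ∀ n : ℕ, t.image (· + n • c) = t := by
  intro n
  induction n with
  | zero => simp
  | succ n ih =>
    have : (fun x => x + (n + 1) • c) = (· + c) ∘ (· + n • c) := by
      funext x
      show x + (n + 1) • c = x + n • c + c
      rw [succ_nsmul, add_assoc]
    rw [this, ← Finset.image_image, ih, h]

private lemma free_action (hp : p.Prime) {t : Finset (ZMod p)} {c : ZMod p}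
    (hc : c ≠ 0) (h : t.image (· + c) = t) (ht : t ≠ ∅) : t = Finset.univ := by
  haveI : Fact p.Prime := ⟨hp⟩
  obtain ⟨x, hx⟩ := Finset.nonempty_of_ne_empty ht
  apply Finset.eq_univ_of_forall
  intro y
  have hm : ∀ m : ZMod p, t.image (· + m * c) = t := by
    intro m
    have := image_add_nsmul t c h m.val
    rwa [nsmul_eq_mul, ZMod.natCast_rightInverse m] at this
  have hy : y = x + ((y - x) * c⁻¹) * c := by
    field_simp
    ring
  rw [← hm ((y - x) * c⁻¹)]
  have hmem : x + ((y - x) * c⁻¹) * c ∈ t.image (· + ((y - x) * c⁻¹) * c) :=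
    Finset.mem_image_of_mem _ hx
  rwa [← hy] at hmem

private lemma shiftS_injOn (hp : p.Prime) {t : Finset (ZMod p)}
    (ht : t ≠ ∅) (ht2 : t ≠ Finset.univ) :
    ∀ i < p, ∀ j < p, (shiftS p)^[i] t = (shiftS p)^[j] t → i = j := by
  have key : ∀ i j, i ≤ j → j < p → (shiftS p)^[i] t = (shiftS p)^[j] t → i = j := by
    intro i j hij hjp h
    by_contra hne
    have hlt : i < j := lt_of_le_of_ne hij hne
    rw [shiftS_iterate, shiftS_iterate] at h
    have h2 : t = t.image (· + ((j - i : ℕ) : ZMod p)) := by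
      have := congrArg (fun s => s.image (· + (-(i : ℕ) : ZMod p))) h
      simp only [Finset.image_image] at this
      have e1 : ((· + (-(i:ℕ) : ZMod p)) ∘ (· + ((i:ℕ) : ZMod p))) = id := by
        funext x; show x + (i:ℕ) + (-(i:ℕ)) = x; ring
      have e2 : ((· + (-(i:ℕ) : ZMod p)) ∘ (· + ((j:ℕ) : ZMod p)))
          = (· + ((j - i : ℕ) : ZMod p)) := by
        funext x
        show x + (j:ℕ) + (-(i:ℕ)) = x + ((j - i : ℕ) : ZMod p)
        rw [Nat.cast_sub hij]
        ring
      rw [e1, e2, Finset.image_id] at this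
      exact this
    have hc : ((j - i : ℕ) : ZMod p) ≠ 0 := by
      rw [Ne, ZMod.natCast_eq_zero_iff]
      intro hdvd
      have : j - i < p := lt_of_le_of_lt (Nat.sub_le j i) hjp
      have hpos : 0 < j - i := Nat.sub_pos_of_lt hlt
      exact absurd (Nat.le_of_dvd hpos hdvd) (not_le.2 this)
    exact ht2 (free_action hp hc h2.symm ht)
  intro i hi j hj h
  rcases le_total i j with hij | hij
  · exact key i j hij hj h
  · exact (key j i hij hi h.symm).symm

variable (p)

private def gfun (a b : A) (t : Finset (ZMod p)) : A :=
  (∏ i ∈ t, tau p σ i a) * ∏ i ∈ tᶜ, tau p σ i b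

private lemma compl_shiftS (t : Finset (ZMod p)) : (shiftS p t)ᶜ = shiftS p tᶜ := by
  ext j
  simp only [Finset.mem_compl, mem_shiftS]

private lemma prod_shiftS (x : A) (t : Finset (ZMod p)) :
    ∏ i ∈ shiftS p t, tau p σ i x = ∏ i ∈ t, tau p σ (i + 1) x := by
  rw [shiftS, Finset.prod_image]
  intro i _ j _ h
  exact add_right_cancel h

include hσ in
private lemma sigma_gfun (a b : A) (t : Finset (ZMod p)) :
    σ (gfun p σ a b t) = gfun p σ a b (shiftS p t) := by
  unfold gfun
  rw [map_mul, map_prod, map_prod, compl_shiftS, prod_shiftS, prod_shiftS]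
  congr 1 <;> exact Finset.prod_congr rfl fun i _ => (tau_add_one p σ hσ i _).symm

include hσ in
private lemma iterate_gfun (a b : A) (t : Finset (ZMod p)) (k : ℕ) :
    (⇑σ)^[k] (gfun p σ a b t) = gfun p σ a b ((shiftS p)^[k] t) := by
  induction k with
  | zero => rfl
  | succ k ih =>
    rw [Function.iterate_succ_apply', Function.iterate_succ_apply', ih,
      sigma_gfun p σ hσ]

include hp hσ in
private lemma orbit_sum (a b : A) :
    ∀ n (B : Finset (Finset (ZMod p))), B.card ≤ n →
    (∀ t ∈ B, shiftS p t ∈ B) → (∀ t ∈ B, t ≠ ∅ ∧ t ≠ Finset.univ) →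
    ∃ u : A, ∑ t ∈ B, gfun p σ a b t = ∑ i : ZMod p, tau p σ i u := by
  intro n
  induction n with
  | zero =>
    intro B hB _ _
    rw [Nat.le_zero, Finset.card_eq_zero] at hB
    subst hB
    exact ⟨0, by simp⟩
  | succ n ih =>
    intro B hB hcl hne
    rcases Finset.eq_empty_or_nonempty B with rfl | ⟨t, ht⟩
    · exact ⟨0, by simp⟩
    have htne := hne t ht
    have hinj := shiftS_injOn hp htne.1 htne.2
    -- the orbit of t
    set O : Finset (Finset (ZMod p)) := (range p).image (fun k => (shiftS p)^[k] t) with hO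
    have hmemO : ∀ k, (shiftS p)^[k] t ∈ B := by
      intro k
      induction k with
      | zero => exact ht
      | succ k ihk => rw [Function.iterate_succ_apply']; exact hcl _ ihk
    have hOB : O ⊆ B := by
      intro s hs
      obtain ⟨k, _, rfl⟩ := Finset.mem_image.1 hs
      exact hmemO k
    have hiter_p : (shiftS p)^[p] t = t := by
      rw [shiftS_iterate, ZMod.natCast_self]
      simp
    have hcardO : O.card = p := by
      rw [hO, Finset.card_image_of_injOn, Finset.card_range]
      intro i hi j hj h
      exact hinj i (Finset.mem_range.1 hi) j (Finset.mem_range.1 hj) h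
    have hsplit := Finset.sum_sdiff (f := gfun p σ a b) hOB
    have hsumO : ∑ s ∈ O, gfun p σ a b s = ∑ i : ZMod p, tau p σ i (gfun p σ a b t) := by
      rw [hO, Finset.sum_image (fun i hi j hj h =>
        hinj i (Finset.mem_range.1 hi) j (Finset.mem_range.1 hj) h)]
      rw [sum_zmod p (fun k => gfun p σ a b ((shiftS p)^[k] t))]
      refine Finset.sum_congr rfl fun i _ => ?_
      rw [← iterate_gfun p σ hσ, ← sigmaPow_apply]
      rfl
    have hcard' : (B \ O).card ≤ n := by
      have h1 : (B \ O).card = B.card - p := by rw [Finset.card_sdiff_of_subset hOB, hcardO]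
      have h2 : 1 ≤ p := hp.one_lt.le.trans' (by norm_num)
      omega
    have hcl' : ∀ s ∈ B \ O, shiftS p s ∈ B \ O := by
      intro s hs
      rw [Finset.mem_sdiff] at hs ⊢
      refine ⟨hcl _ hs.1, fun hmem => hs.2 ?_⟩
      obtain ⟨k, hk, hks⟩ := Finset.mem_image.1 hmem
      rw [Finset.mem_range] at hk
      have hinjS : Function.Injective (shiftS p) := by
        intro u v huv
        apply Finset.image_injective (f := fun x : ZMod p => x + 1) ?_ huv
        intro x y hxy
        exact add_right_cancel hxy
      rcases Nat.eq_zero_or_pos k with rfl | hkpos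
      · -- shiftS s = t, so s = shiftS^[p-1] t
        have : shiftS p s = shiftS p ((shiftS p)^[p - 1] t) := by
          rw [← Function.iterate_succ_apply' (shiftS p) (p - 1) t]
          rw [Nat.succ_eq_add_one, Nat.sub_add_cancel hp.one_lt.le, hiter_p]
          exact hks.symm
        have := hinjS this
        rw [hO]
        exact this ▸ Finset.mem_image_of_mem _ (Finset.mem_range.2 (by omega))
      · obtain ⟨k', rfl⟩ := Nat.exists_eq_succ_of_ne_zero hkpos.ne'
        rw [Function.iterate_succ_apply'] at hks
        have := hinjS hks
        rw [hO]
        exact this ▸ Finset.mem_image_of_mem _ (Finset.mem_range.2 (by omega))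
    have hne' : ∀ s ∈ B \ O, s ≠ ∅ ∧ s ≠ Finset.univ := fun s hs =>
      hne s (Finset.mem_sdiff.1 hs).1
    obtain ⟨u', hu'⟩ := ih (B \ O) hcard' hcl' hne'
    refine ⟨gfun p σ a b t + u', ?_⟩
    rw [← hsplit, hu', hsumO, ← Finset.sum_add_distrib]
    refine Finset.sum_congr rfl fun i _ => ?_
    rw [add_comm, map_add]

private lemma shiftS_univ : shiftS p (Finset.univ : Finset (ZMod p)) = Finset.univ := by
  ext j
  simp [mem_shiftS]

include hp hσ in
private lemma prod_add_key (a b : A) :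
    ∃ u : A, ∏ i : ZMod p, tau p σ i (a + b) =
      ∏ i : ZMod p, tau p σ i a + ∏ i : ZMod p, tau p σ i b
        + ∑ i : ZMod p, tau p σ i u := by
  classical
  have h1 : ∏ i : ZMod p, tau p σ i (a + b) = ∑ t : Finset (ZMod p), gfun p σ a b t := by
    have : ∀ i : ZMod p, tau p σ i (a + b) = tau p σ i a + tau p σ i b :=
      fun i => map_add _ _ _
    rw [Finset.prod_congr rfl fun i _ => this i]
    rw [Finset.prod_add]
    rw [← Finset.powerset_univ]
    refine Finset.sum_congr rfl fun t _ => ?_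
    unfold gfun
    rw [Finset.compl_eq_univ_sdiff]
  haveI : Nonempty (ZMod p) := ⟨0⟩
  have hne : (∅ : Finset (ZMod p)) ≠ Finset.univ :=
    (Finset.univ_nonempty.ne_empty).symm
  set pair : Finset (Finset (ZMod p)) := {∅, Finset.univ} with hpair
  have hsub : pair ⊆ Finset.univ := Finset.subset_univ _
  have hsplit := Finset.sum_sdiff (f := gfun p σ a b) hsub
  have hpairsum : ∑ t ∈ pair, gfun p σ a b t =
      ∏ i : ZMod p, tau p σ i b + ∏ i : ZMod p, tau p σ i a := by
    rw [hpair, Finset.sum_pair hne]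
    congr 1
    · unfold gfun; rw [Finset.prod_empty, one_mul, Finset.compl_empty]
    · unfold gfun; rw [Finset.compl_univ, Finset.prod_empty, mul_one]
  have hinjS : Function.Injective (shiftS p) := by
    intro u v huv
    apply Finset.image_injective (f := fun x : ZMod p => x + 1) ?_ huv
    intro x y hxy
    exact add_right_cancel hxy
  obtain ⟨u, hu⟩ := orbit_sum p hp σ hσ a b (Finset.univ \ pair).card (Finset.univ \ pair)
    le_rfl
    (by
      intro t htm
      rw [Finset.mem_sdiff] at htm ⊢
      refine ⟨Finset.mem_univ _, fun hmem => htm.2 ?_⟩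
      rw [hpair, Finset.mem_insert, Finset.mem_singleton] at hmem ⊢
      rcases hmem with h | h
      · left; exact Finset.image_eq_empty.1 h
      · right; exact hinjS (h.trans (shiftS_univ p).symm))
    (by
      intro t htm
      rw [Finset.mem_sdiff, hpair, Finset.mem_insert, Finset.mem_singleton] at htm
      exact ⟨fun h => htm.2 (Or.inl h), fun h => htm.2 (Or.inr h)⟩)
  refine ⟨u, ?_⟩
  rw [h1, ← hsplit, hu, hpairsum]
  ring

include hσ in
private lemma sigma_sum_fix (x : A) :
    σ (∑ i : ZMod p, tau p σ i x) = ∑ i : ZMod p, tau p σ i x := by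
  rw [map_sum]
  exact Fintype.sum_equiv (Equiv.addRight (1 : ZMod p)) _ _
    (fun i => (tau_add_one p σ hσ i x).symm)

include hσ in
private lemma sigma_prod_fix (x : A) :
    σ (∏ i : ZMod p, tau p σ i x) = ∏ i : ZMod p, tau p σ i x := by
  rw [map_prod]
  exact Fintype.prod_equiv (Equiv.addRight (1 : ZMod p)) _ _
    (fun i => (tau_add_one p σ hσ i x).symm)

private lemma fix_iter {c : A} (hc : σ c = c) : ∀ n, (⇑σ)^[n] c = c := by
  intro n
  induction n with
  | zero => rfl
  | succ n ih => rw [Function.iterate_succ_apply', ih, hc]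

private lemma sumN_eq (x : A) :
    ∑ i ∈ Finset.range p, (⇑σ)^[i] x = ∑ i : ZMod p, tau p σ i x := by
  rw [sum_zmod p (fun n => (⇑σ)^[n] x)]
  exact Finset.sum_congr rfl fun i _ => (sigmaPow_apply σ i.val x).symm

private lemma prodP_eq (x : A) :
    ∏ i ∈ Finset.range p, (⇑σ)^[i] x = ∏ i : ZMod p, tau p σ i x := by
  rw [prod_zmod p (fun n => (⇑σ)^[n] x)]
  exact Finset.prod_congr rfl fun i _ => (sigmaPow_apply σ i.val x).symm

private lemma iter_add (n : ℕ) (x y : A) :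
    (⇑σ)^[n] (x + y) = (⇑σ)^[n] x + (⇑σ)^[n] y := by
  rw [← sigmaPow_apply, ← sigmaPow_apply, ← sigmaPow_apply, map_add]

private lemma iter_mul (n : ℕ) (x y : A) :
    (⇑σ)^[n] (x * y) = (⇑σ)^[n] x * (⇑σ)^[n] y := by
  rw [← sigmaPow_apply, ← sigmaPow_apply, ← sigmaPow_apply, map_mul]

end Aux

/--
Let `p` be a prime, `A` a commutative ring and `σ` a ring automorphism of `A` with
`σ^p = id`.  Write `N a = ∑_{i<p} σ^i a` for the norm map.  Then (1) the image of the
norm map is an ideal of the fixed subring `A^σ`, and (2) the map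
`a ↦ class of σ⁰(a)⋯σ^{p-1}(a)` in `A^σ / N(A)` is a ring homomorphism.
-/
theorem normImage_isIdeal_and_product_ringHom
    (p : ℕ) (hp : p.Prime)
    (A : Type*) [CommRing A]
    (σ : A ≃+* A) (hσ : ∀ a, (⇑σ)^[p] a = a) :
    ∃ I : Ideal (fixedSubring σ),
      -- (1) the elements of I are exactly the norms
      (∀ x : fixedSubring σ,
          x ∈ I ↔ ∃ a : A, (x : A) = ∑ i ∈ Finset.range p, (⇑σ)^[i] a) ∧
      -- products of conjugates are fixed by σ
      (∀ a : A, (∏ i ∈ Finset.range p, (⇑σ)^[i] a) ∈ fixedSubring σ) ∧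
      -- (2) a ↦ [∏_{i<p} σ^i(a)] is a ring homomorphism A → A^σ / N(A)
      ∃ φ : A →+* (fixedSubring σ) ⧸ I,
        ∀ (a : A) (h : (∏ i ∈ Finset.range p, (⇑σ)^[i] a) ∈ fixedSubring σ),
          φ a = Ideal.Quotient.mk I ⟨∏ i ∈ Finset.range p, (⇑σ)^[i] a, h⟩ := by
  haveI : NeZero p := ⟨hp.pos.ne'⟩
  have hNfix : ∀ x : A, (∑ i ∈ Finset.range p, (⇑σ)^[i] x) ∈ fixedSubring σ := by
    intro x
    show σ _ = _
    rw [sumN_eq p σ x]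
    exact sigma_sum_fix p σ hσ x
  have hPfix : ∀ a : A, (∏ i ∈ Finset.range p, (⇑σ)^[i] a) ∈ fixedSubring σ := by
    intro x
    show σ _ = _
    rw [prodP_eq p σ x]
    exact sigma_prod_fix p σ hσ x
  let I : Ideal (fixedSubring σ) :=
    { carrier := {x : fixedSubring σ | ∃ a : A, (x : A) = ∑ i ∈ Finset.range p, (⇑σ)^[i] a}
      zero_mem' := ⟨0, by
        rw [ZeroMemClass.coe_zero]
        symm
        refine Finset.sum_eq_zero fun i _ => ?_
        rw [← sigmaPow_apply, map_zero]⟩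
      add_mem' := by
        rintro x y ⟨a, ha⟩ ⟨b, hb⟩
        refine ⟨a + b, ?_⟩
        rw [AddMemClass.coe_add, ha, hb, ← Finset.sum_add_distrib]
        exact Finset.sum_congr rfl fun i _ => (iter_add σ i a b).symm
      smul_mem' := by
        rintro c x ⟨a, ha⟩
        refine ⟨(c : A) * a, ?_⟩
        have : ((c • x : fixedSubring σ) : A) = (c : A) * (x : A) := rfl
        rw [this, ha, Finset.mul_sum]
        refine Finset.sum_congr rfl fun i _ => ?_
        rw [iter_mul, fix_iter σ c.2] }
  refine ⟨I, fun x => Iff.rfl, hPfix, ?_⟩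
  refine ⟨{ toFun := fun a => Ideal.Quotient.mk I ⟨_, hPfix a⟩
            map_one' := ?_
            map_mul' := ?_
            map_zero' := ?_
            map_add' := ?_ }, fun a h => rfl⟩
  · show Ideal.Quotient.mk I ⟨∏ i ∈ Finset.range p, (⇑σ)^[i] (1 : A), hPfix 1⟩ = 1
    have h1 : (⟨∏ i ∈ Finset.range p, (⇑σ)^[i] (1 : A), hPfix 1⟩ : fixedSubring σ) = 1 := by
      refine Subtype.ext ?_
      show ∏ i ∈ Finset.range p, (⇑σ)^[i] (1 : A) = 1
      refine Finset.prod_eq_one fun i _ => ?_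
      rw [← sigmaPow_apply, map_one]
    rw [h1, map_one]
  · intro x y
    show Ideal.Quotient.mk I ⟨∏ i ∈ Finset.range p, (⇑σ)^[i] (x * y), hPfix (x * y)⟩
        = Ideal.Quotient.mk I ⟨_, hPfix x⟩ * Ideal.Quotient.mk I ⟨_, hPfix y⟩
    rw [← RingHom.map_mul (Ideal.Quotient.mk I)]
    refine congrArg _ (Subtype.ext ?_)
    show ∏ i ∈ Finset.range p, (⇑σ)^[i] (x * y)
        = (∏ i ∈ Finset.range p, (⇑σ)^[i] x) * ∏ i ∈ Finset.range p, (⇑σ)^[i] y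
    rw [← Finset.prod_mul_distrib]
    exact Finset.prod_congr rfl fun i _ => iter_mul σ i x y
  · show Ideal.Quotient.mk I ⟨∏ i ∈ Finset.range p, (⇑σ)^[i] (0 : A), hPfix 0⟩ = 0
    have h0 : (⟨∏ i ∈ Finset.range p, (⇑σ)^[i] (0 : A), hPfix 0⟩ : fixedSubring σ) = 0 := by
      refine Subtype.ext ?_
      show ∏ i ∈ Finset.range p, (⇑σ)^[i] (0 : A) = 0
      exact Finset.prod_eq_zero (Finset.mem_range.2 hp.pos) rfl
    rw [h0, map_zero]
  · intro x y
    show Ideal.Quotient.mk I ⟨∏ i ∈ Finset.range p, (⇑σ)^[i] (x + y), hPfix (x + y)⟩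
        = Ideal.Quotient.mk I ⟨_, hPfix x⟩ + Ideal.Quotient.mk I ⟨_, hPfix y⟩
    rw [← RingHom.map_add (Ideal.Quotient.mk I), Ideal.Quotient.mk_eq_mk_iff_sub_mem]
    obtain ⟨u, hu⟩ := prod_add_key p hp σ hσ x y
    refine ⟨u, ?_⟩
    show (∏ i ∈ Finset.range p, (⇑σ)^[i] (x + y))
          - ((∏ i ∈ Finset.range p, (⇑σ)^[i] x) + ∏ i ∈ Finset.range p, (⇑σ)^[i] y)
        = ∑ i ∈ Finset.range p, (⇑σ)^[i] u
    rw [prodP_eq, prodP_eq, prodP_eq, sumN_eq, hu]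
    ring
end

section
/- Let p be a prime, k an algebraically closed field of characteristic p, A a commutative k-algebra, and σ a k-algebra automorphism of A with σ^p = id. Set Ā = A^σ/N(A), a k-algebra. Every σ-invariant k-algebra homomorphism χ : A → k (i.e. with χ∘σ = χ) vanishes on N(A), hence its restriction to A^σ induces a k-algebra homomorphism Ā → k; and the resulting map {k-algebra homomorphisms χ : A → k with χ∘σ = χ} → {k-algebra homomorphisms Ā → k} is a bijection. -/
/-- The fixed subalgebra `A^σ` of a `k`-algebra automorphism `σ` of `A`. -/
def fixedSubalgebra {k A : Type*} [CommSemiring k] [Semiring A] [Algebra k A]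
    (σ : A ≃ₐ[k] A) : Subalgebra k A where
  carrier := {a : A | σ a = a}
  mul_mem' := by
    intro a b ha hb
    show σ (a * b) = a * b
    rw [map_mul, ha, hb]
  add_mem' := by
    intro a b ha hb
    show σ (a + b) = a + b
    rw [map_add, ha, hb]
  algebraMap_mem' := fun r => σ.commutes r

private theorem rotate_prod {M : Type*} [CommMonoid M] {p : ℕ} (hp : 0 < p) (f : ℕ → M)
    (hf : ∀ i, f ((i + 1) % p) = f (i + 1)) :
    ∏ i ∈ Finset.range p, f (i + 1) = ∏ i ∈ Finset.range p, f i :=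
  Finset.prod_nbij' (fun x => (x + 1) % p) (fun x => (x + (p - 1)) % p)
    (fun a _ => Finset.mem_range.2 (Nat.mod_lt _ hp))
    (fun a _ => Finset.mem_range.2 (Nat.mod_lt _ hp))
    (fun a ha => by
      show ((a + 1) % p + (p - 1)) % p = a
      rw [Nat.mod_add_mod, show a + 1 + (p - 1) = a + p by omega, Nat.add_mod_right]
      exact Nat.mod_eq_of_lt (Finset.mem_range.1 ha))
    (fun a ha => by
      show ((a + (p - 1)) % p + 1) % p = a
      rw [Nat.mod_add_mod, show a + (p - 1) + 1 = a + p by omega, Nat.add_mod_right]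
      exact Nat.mod_eq_of_lt (Finset.mem_range.1 ha))
    (fun a _ => (hf a).symm)

private theorem rotate_sum {M : Type*} [AddCommMonoid M] {p : ℕ} (hp : 0 < p) (f : ℕ → M)
    (hf : ∀ i, f ((i + 1) % p) = f (i + 1)) :
    ∑ i ∈ Finset.range p, f (i + 1) = ∑ i ∈ Finset.range p, f i :=
  Finset.sum_nbij' (fun x => (x + 1) % p) (fun x => (x + (p - 1)) % p)
    (fun a _ => Finset.mem_range.2 (Nat.mod_lt _ hp))
    (fun a _ => Finset.mem_range.2 (Nat.mod_lt _ hp))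
    (fun a ha => by
      show ((a + 1) % p + (p - 1)) % p = a
      rw [Nat.mod_add_mod, show a + 1 + (p - 1) = a + p by omega, Nat.add_mod_right]
      exact Nat.mod_eq_of_lt (Finset.mem_range.1 ha))
    (fun a ha => by
      show ((a + (p - 1)) % p + 1) % p = a
      rw [Nat.mod_add_mod, show a + (p - 1) + 1 = a + p by omega, Nat.add_mod_right]
      exact Nat.mod_eq_of_lt (Finset.mem_range.1 ha))
    (fun a _ => (hf a).symm)

/--
Let `p` be a prime, `k` an algebraically closed field of characteristic `p`, `A` a
commutative `k`-algebra and `σ` a `k`-algebra automorphism of `A` with `σ^p = id`.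
Every `σ`-invariant character `χ : A → k` vanishes on the image of the norm map
`N a = ∑_{i<p} σ^i a`, hence induces a character of `Ā = A^σ/N(A)`; and the resulting map
from `σ`-invariant characters of `A` to characters of `Ā` is a bijection.  (Characters of
`Ā` are identified with characters of `A^σ` vanishing on the norms.)
-/
theorem invariant_characters_bijection
    (p : ℕ) (hp : p.Prime)
    (k : Type*) [Field k] [IsAlgClosed k] [CharP k p]
    (A : Type*) [CommRing A] [Algebra k A]
    (σ : A ≃ₐ[k] A) (hσ : ∀ a, (⇑σ)^[p] a = a) :
    -- invariant characters kill the image of the norm map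
    ((∀ χ : A →ₐ[k] k, (∀ a, χ (σ a) = χ a) →
        ∀ a : A, χ (∑ i ∈ Finset.range p, (⇑σ)^[i] a) = 0)
    -- injectivity: an invariant character is determined by its restriction to A^σ
    ∧ (∀ χ₁ χ₂ : A →ₐ[k] k, (∀ a, χ₁ (σ a) = χ₁ a) → (∀ a, χ₂ (σ a) = χ₂ a) →
        (∀ a : A, σ a = a → χ₁ a = χ₂ a) → χ₁ = χ₂)
    -- surjectivity: every character of A^σ vanishing on the norms extends to an
    -- invariant character of A
    ∧ (∀ ψ : ↥(fixedSubalgebra σ) →ₐ[k] k,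
        (∀ x : fixedSubalgebra σ,
          (∃ a : A, (x : A) = ∑ i ∈ Finset.range p, (⇑σ)^[i] a) → ψ x = 0) →
        ∃ χ : A →ₐ[k] k, (∀ a, χ (σ a) = χ a) ∧
          ∀ x : fixedSubalgebra σ, χ x = ψ x)) := by
  have hp0 : 0 < p := hp.pos
  haveI : Fact p.Prime := ⟨hp⟩
  -- basic iterate facts
  have hitmul : ∀ q a, (⇑σ)^[p * q] a = a := fun q a => by
    rw [Function.iterate_mul]; exact Function.iterate_fixed (hσ a) q
  have hmod : ∀ m a, (⇑σ)^[m] a = (⇑σ)^[m % p] a := by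
    intro m a
    conv_lhs => rw [← Nat.div_add_mod m p]
    rw [Function.iterate_add_apply, hitmul]
  have hiterinv : ∀ (χ : A →ₐ[k] k), (∀ a, χ (σ a) = χ a) → ∀ i a, χ ((⇑σ)^[i] a) = χ a := by
    intro χ hχ i
    induction i with
    | zero => intro a; rfl
    | succ n ih => intro a; rw [Function.iterate_succ_apply, ih, hχ]
  -- the norm is fixed
  have hNfix : ∀ a : A, σ (∑ i ∈ Finset.range p, (⇑σ)^[i] a) = ∑ i ∈ Finset.range p, (⇑σ)^[i] a := by
    intro a
    rw [map_sum]
    calc ∑ i ∈ Finset.range p, σ ((⇑σ)^[i] a)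
        = ∑ i ∈ Finset.range p, (⇑σ)^[i + 1] a :=
          Finset.sum_congr rfl fun i _ => (Function.iterate_succ_apply' _ _ _).symm
      _ = ∑ i ∈ Finset.range p, (⇑σ)^[i] a :=
          rotate_sum hp0 (fun i => (⇑σ)^[i] a) (fun i => (hmod (i + 1) a).symm)
  refine ⟨?_, ?_, ?_⟩
  · -- part 1
    intro χ hχ a
    rw [map_sum]
    rw [Finset.sum_congr rfl fun i _ => hiterinv χ hχ i a, Finset.sum_const, Finset.card_range,
      nsmul_eq_mul, CharP.cast_eq_zero k p, zero_mul]
  · -- part 2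
    intro χ₁ χ₂ h₁ h₂ hagree
    ext a
    have hPfix : σ (∏ i ∈ Finset.range p, (⇑σ)^[i] a) = ∏ i ∈ Finset.range p, (⇑σ)^[i] a := by
      rw [map_prod]
      calc ∏ i ∈ Finset.range p, σ ((⇑σ)^[i] a)
          = ∏ i ∈ Finset.range p, (⇑σ)^[i + 1] a :=
            Finset.prod_congr rfl fun i _ => (Function.iterate_succ_apply' _ _ _).symm
        _ = ∏ i ∈ Finset.range p, (⇑σ)^[i] a :=
            rotate_prod hp0 (fun i => (⇑σ)^[i] a) (fun i => (hmod (i + 1) a).symm)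
    have e1 : χ₁ (∏ i ∈ Finset.range p, (⇑σ)^[i] a) = χ₁ a ^ p := by
      rw [map_prod, Finset.prod_congr rfl fun i _ => hiterinv χ₁ h₁ i a, Finset.prod_const,
        Finset.card_range]
    have e2 : χ₂ (∏ i ∈ Finset.range p, (⇑σ)^[i] a) = χ₂ a ^ p := by
      rw [map_prod, Finset.prod_congr rfl fun i _ => hiterinv χ₂ h₂ i a, Finset.prod_const,
        Finset.card_range]
    have hpp := hagree _ hPfix
    rw [e1, e2] at hpp
    have hz : (χ₁ a - χ₂ a) ^ p = 0 := by rw [sub_pow_char, hpp, sub_self]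
    have := pow_eq_zero_iff hp.ne_zero |>.1 hz
    exact sub_eq_zero.1 this
  · -- part 3
    intro ψ hψ
    -- every element of A is integral over the fixed subalgebra
    have hint : ∀ a : A, ∃ Q : Polynomial ↥(fixedSubalgebra σ), Q.Monic ∧
        Polynomial.eval₂ (algebraMap ↥(fixedSubalgebra σ) A) a Q = 0 := by
      intro a
      set q : Polynomial A :=
        ∏ i ∈ Finset.range p, (Polynomial.X - Polynomial.C ((⇑σ)^[i] a)) with hq
      have hqmonic : q.Monic :=
        Polynomial.monic_prod_of_monic _ _ fun i _ => Polynomial.monic_X_sub_C _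
      have hqeval : Polynomial.eval a q = 0 := by
        rw [hq, Polynomial.eval_prod]
        exact Finset.prod_eq_zero (i := 0) (Finset.mem_range.2 hp0) (by simp)
      have hqfix : ∀ n, σ (q.coeff n) = q.coeff n := by
        intro n
        have hmap : q.map σ.toAlgHom.toRingHom = q := by
          rw [hq, Polynomial.map_prod]
          calc ∏ i ∈ Finset.range p,
                ((Polynomial.X - Polynomial.C ((⇑σ)^[i] a)).map σ.toAlgHom.toRingHom)
              = ∏ i ∈ Finset.range p, (Polynomial.X - Polynomial.C ((⇑σ)^[i + 1] a)) := by
                refine Finset.prod_congr rfl fun i _ => ?_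
                rw [Polynomial.map_sub, Polynomial.map_X, Polynomial.map_C]
                congr 1
                exact congrArg _ (Function.iterate_succ_apply' _ _ _).symm
            _ = q := by
                rw [hq]
                exact rotate_prod hp0 (fun i => Polynomial.X - Polynomial.C ((⇑σ)^[i] a))
                  (fun i => congrArg (fun z => Polynomial.X - Polynomial.C z)
                    ((hmod (i + 1) a).symm))
        conv_rhs => rw [← hmap]
        rw [Polynomial.coeff_map]
        rfl
      have hlift : q ∈ Polynomial.lifts (algebraMap ↥(fixedSubalgebra σ) A) := by
        rw [Polynomial.lifts_iff_coeff_lifts]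
        intro n
        exact ⟨⟨q.coeff n, hqfix n⟩, rfl⟩
      obtain ⟨Q, hQmap, -, hQmonic⟩ := Polynomial.lifts_and_natDegree_eq_and_monic hlift hqmonic
      exact ⟨Q, hQmonic, by rw [← Polynomial.eval_map, hQmap, hqeval]⟩
    haveI : Algebra.IsIntegral ↥(fixedSubalgebra σ) A := ⟨fun a => hint a⟩
    have hψsurj : Function.Surjective ψ := fun c => ⟨algebraMap k _ c, ψ.commutes c⟩
    haveI hker : (RingHom.ker ψ).IsMaximal := RingHom.ker_isMaximal_of_surjective ψ hψsurj
    obtain ⟨M, hMmax, hMcomap⟩ :=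
      Ideal.exists_ideal_over_maximal_of_isIntegral (RingHom.ker ψ)
        (fun x hx => by
          have hx0 : x = 0 := Subtype.ext hx
          simp [RingHom.mem_ker, hx0])
    haveI := hMmax
    haveI : M.IsPrime := hMmax.isPrime
    -- the quotient field
    have key : ∀ x : ↥(fixedSubalgebra σ),
        Ideal.Quotient.mk M (x : A) = algebraMap k (A ⧸ M) (ψ x) := by
      intro x
      have h1 : (x : A) - algebraMap k A (ψ x) ∈ M := by
        have hy : (x - algebraMap k ↥(fixedSubalgebra σ) (ψ x)) ∈ RingHom.ker ψ := by
          simp [RingHom.mem_ker, map_sub, AlgHom.commutes]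
        rw [← hMcomap, Ideal.mem_comap] at hy
        simpa [map_sub] using hy
      have h2 : Ideal.Quotient.mk M ((x : A) - algebraMap k A (ψ x)) = 0 :=
        Ideal.Quotient.eq_zero_iff_mem.2 h1
      rw [map_sub, sub_eq_zero] at h2
      rw [h2]
      exact (Ideal.Quotient.mkₐ k M).commutes (ψ x)
    haveI : Algebra.IsIntegral k (A ⧸ M) := by
      constructor
      intro x
      obtain ⟨a, rfl⟩ := Ideal.Quotient.mk_surjective x
      obtain ⟨Q, hQm, hQe⟩ := hint a
      refine ⟨Q.map ψ.toRingHom, hQm.map _, ?_⟩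
      rw [Polynomial.eval₂_map]
      have hcomp : (algebraMap k (A ⧸ M)).comp ψ.toRingHom =
          (Ideal.Quotient.mk M).comp (algebraMap ↥(fixedSubalgebra σ) A) := by
        ext y
        exact (key y).symm
      rw [hcomp, ← Polynomial.hom_eval₂, hQe, map_zero]
    have hbij : Function.Bijective (algebraMap k (A ⧸ M)) :=
      ⟨(algebraMap k (A ⧸ M)).injective, IsAlgClosed.algebraMap_bijective_of_isIntegral.2⟩
    let e : k ≃ₐ[k] (A ⧸ M) := AlgEquiv.ofBijective (Algebra.ofId k (A ⧸ M)) hbij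
    let χ : A →ₐ[k] k := e.symm.toAlgHom.comp (Ideal.Quotient.mkₐ k M)
    have hres : ∀ x : ↥(fixedSubalgebra σ), χ (x : A) = ψ x := by
      intro x
      have hx : (Ideal.Quotient.mkₐ k M) (x : A) = e (ψ x) := key x
      show e.symm ((Ideal.Quotient.mkₐ k M) (x : A)) = ψ x
      rw [hx, AlgEquiv.symm_apply_apply]
    have hsum : ∀ a : A, ∑ i ∈ Finset.range p, χ ((⇑σ)^[i] a) = 0 := by
      intro a
      rw [← map_sum]
      have hfix := hNfix a
      have h3 : χ ((⟨_, hfix⟩ : ↥(fixedSubalgebra σ)) : A) = ψ ⟨_, hfix⟩ := hres ⟨_, hfix⟩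
      exact h3.trans (hψ ⟨_, hfix⟩ ⟨a, rfl⟩)
    -- invariance of χ
    classical
    have hinv : ∀ a, χ (σ a) = χ a := by
      by_contra hne
      -- the monoid homomorphisms a ↦ χ (σ^[i] a)
      have hit1 : ∀ i : ℕ, (⇑σ)^[i] (1 : A) = 1 := fun i => Function.iterate_fixed (map_one σ) i
      have hitmul' : ∀ (i : ℕ) (x y : A), (⇑σ)^[i] (x * y) = (⇑σ)^[i] x * (⇑σ)^[i] y := by
        intro i
        induction i with
        | zero => intro x y; rfl
        | succ n ih =>
          intro x y
          rw [Function.iterate_succ_apply, Function.iterate_succ_apply,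
            Function.iterate_succ_apply, map_mul, ih]
      let m : ℕ → (A →* k) := fun i =>
        { toFun := fun a => χ ((⇑σ)^[i] a)
          map_one' := by
            show χ ((⇑σ)^[i] (1 : A)) = 1
            rw [hit1, map_one]
          map_mul' := fun x y => by
            show χ ((⇑σ)^[i] (x * y)) = χ ((⇑σ)^[i] x) * χ ((⇑σ)^[i] y)
            rw [hitmul', map_mul] }
      have hm : ∀ i a, m i a = χ ((⇑σ)^[i] a) := fun _ _ => rfl
      -- if two of them agree then χ would be invariant
      have hstep : ∀ i j : ℕ, i < j → j < p →
          (∀ a, χ ((⇑σ)^[i] a) = χ ((⇑σ)^[j] a)) → False := by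
        intro i j hij hjp hEq
        obtain ⟨d, hdpos', hdlt, hd⟩ : ∃ d, 0 < d ∧ d < p ∧ i + (p - j) = d :=
          ⟨i + (p - j), by omega, by omega, rfl⟩
        have hdinv : ∀ b, χ ((⇑σ)^[d] b) = χ b := by
          intro b
          have h4 := hEq ((⇑σ)^[p - j] b)
          rw [← Function.iterate_add_apply, ← Function.iterate_add_apply,
            show j + (p - j) = p by omega, hd] at h4
          rw [hσ b] at h4
          exact h4
        have hdm : ∀ (n : ℕ) (b : A), χ ((⇑σ)^[d * n] b) = χ b := by
          intro n
          induction n with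
          | zero => intro b; simp
          | succ t ih =>
            intro b
            rw [show d * (t + 1) = d * t + d by ring, Function.iterate_add_apply, ih, hdinv]
        have hcop : Nat.Coprime d p :=
          Nat.Coprime.symm ((Nat.Prime.coprime_iff_not_dvd hp).2
            (fun hdvd => absurd (Nat.le_of_dvd hdpos' hdvd) (not_le.2 hdlt)))
        obtain ⟨t, -, ht⟩ := Nat.exists_mul_mod_eq_one_of_coprime hcop hp.one_lt
        apply hne
        intro b
        have h5 := hdm t b
        rw [hmod (d * t) b, ht] at h5
        simpa using h5
      have hminj : ∀ i ∈ Finset.range p, ∀ j ∈ Finset.range p, m i = m j → i = j := by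
        intro i hi j hj hij
        by_contra hne'
        have hij' : ∀ a, χ ((⇑σ)^[i] a) = χ ((⇑σ)^[j] a) := fun a => DFunLike.congr_fun hij a
        rcases Nat.lt_or_ge i j with h | h
        · exact hstep i j h (Finset.mem_range.1 hj) hij'
        · have hji : j < i := by omega
          exact hstep j i hji (Finset.mem_range.1 hi) (fun a => (hij' a).symm)
      have hli := linearIndependent_iff'.1 (linearIndependent_monoidHom A k)
      have hzero : ∑ f ∈ (Finset.range p).image m, (1 : k) • (f : A → k) = 0 := by
        rw [Finset.sum_image hminj]
        funext a
        rw [Finset.sum_apply]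
        simp only [one_smul]
        exact hsum a
      have hcontr := hli ((Finset.range p).image m) (fun _ => 1) hzero (m 0)
        (Finset.mem_image.2 ⟨0, Finset.mem_range.2 hp0, rfl⟩)
      exact one_ne_zero hcontr
    exact ⟨χ, hinv, fun x => hres x⟩
end

section
/- Let p be a prime, A a commutative ring, σ a ring automorphism of A with σ^p = id, and K a field. If χ̃ : A → K is a (unital) ring homomorphism satisfying χ̃(N(a)) = 0 for every a ∈ A, then χ̃ ∘ σ = χ̃. -/
/--
Let `p` be a prime, `A` a commutative ring, `σ` a ring automorphism of `A` with
`σ^p = id`, and `K` a field.  If a ring homomorphism `χ : A → K` kills all the norms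
`N a = ∑_{i<p} σ^i a`, then `χ ∘ σ = χ`.
-/
theorem char_vanishing_on_norms_is_invariant
    (p : ℕ) (hp : p.Prime)
    (A : Type*) [CommRing A]
    (σ : A ≃+* A) (hσ : ∀ a, (⇑σ)^[p] a = a)
    (K : Type*) [Field K] (χ : A →+* K)
    (hχ : ∀ a : A, χ (∑ i ∈ Finset.range p, (⇑σ)^[i] a) = 0) :
    ∀ a : A, χ (σ a) = χ a := by
  intro a0
  by_contra hne
  have hid : (⇑σ)^[p] = id := funext hσ
  have hmul : ∀ k a, (⇑σ)^[p * k] a = a := by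
    intro k a
    rw [Function.iterate_mul, hid, Function.iterate_id, id]
  have hmod : ∀ i a, (⇑σ)^[i] a = (⇑σ)^[i % p] a := by
    intro i a
    conv_lhs => rw [← Nat.mod_add_div i p, Function.iterate_add_apply, hmul]
  -- the characters χ ∘ σ^[i] as monoid homs
  let η : ℕ → (A →* K) := fun i =>
    { toFun := fun a => χ ((⇑σ)^[i] a)
      map_one' := by simp [iterate_map_one]
      map_mul' := fun a b => by simp [iterate_map_mul] }
  have ηeq : ∀ i a, η i a = χ ((⇑σ)^[i] a) := fun _ _ => rfl
  -- if χ ∘ σ^[k] = χ for some 0 < k < p then χ ∘ σ = χ, contradiction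
  have key : ∀ k, 0 < k → k < p → (∀ a, χ ((⇑σ)^[k] a) = χ a) → False := by
    intro k hk0 hkp hfix
    have hcop : Nat.Coprime p k :=
      hp.coprime_iff_not_dvd.mpr (fun h => absurd (Nat.le_of_dvd hk0 h) (by omega))
    obtain ⟨m, -, hm⟩ := Nat.exists_mul_mod_eq_one_of_coprime hcop.symm hp.one_lt
    have hiter : ∀ n a, χ ((⇑σ)^[k * n] a) = χ a := by
      intro n
      induction n with
      | zero => simp
      | succ n ih =>
        intro a
        rw [Nat.mul_succ, Function.iterate_add_apply, ih, hfix]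
    have : χ (σ a0) = χ a0 := by
      have := hiter m a0
      rwa [hmod (k * m), hm, Function.iterate_one] at this
    exact hne this
  -- the characters η 0, ..., η (p-1) are pairwise distinct
  have hinj : Function.Injective (fun i : Fin p => η i) := by
    intro i j hij
    by_contra hij'
    -- wlog i < j
    rcases Nat.lt_or_ge (i : ℕ) j with hlt | hge
    · have hk : ∀ a, χ ((⇑σ)^[(i : ℕ) + (p - (j : ℕ))] a) = χ a := by
        intro a
        have := congrFun (congrArg DFunLike.coe hij) ((⇑σ)^[p - (j : ℕ)] a)
        rw [ηeq, ηeq, ← Function.iterate_add_apply, ← Function.iterate_add_apply] at this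
        rw [this]
        have : (j : ℕ) + (p - (j : ℕ)) = p := by omega
        rw [this, hσ]
      exact key _ (by omega) (by omega) hk
    · have hlt' : (j : ℕ) < i := by
        rcases Nat.lt_or_ge (j : ℕ) i with h | h
        · exact h
        · exact absurd (Fin.ext (by omega)) hij'
      have hk : ∀ a, χ ((⇑σ)^[(j : ℕ) + (p - (i : ℕ))] a) = χ a := by
        intro a
        have := congrFun (congrArg DFunLike.coe hij) ((⇑σ)^[p - (i : ℕ)] a)
        rw [ηeq, ηeq, ← Function.iterate_add_apply, ← Function.iterate_add_apply] at this
        rw [← this]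
        have : (i : ℕ) + (p - (i : ℕ)) = p := by omega
        rw [this, hσ]
      exact key _ (by omega) (by omega) hk
  -- linear independence of characters
  have li : LinearIndependent K (fun i : Fin p => ((η i : A →* K) : A → K)) :=
    (linearIndependent_monoidHom A K).comp (fun i : Fin p => η i) hinj
  have hsum : ∑ i : Fin p, (1 : K) • ((η (i : ℕ) : A →* K) : A → K) = 0 := by
    funext a
    simp only [Finset.sum_apply, Pi.smul_apply, one_smul, Pi.zero_apply]
    have := hχ a
    rw [map_sum] at this
    rw [← this]
    exact Fin.sum_univ_eq_sum_range (fun i => χ ((⇑σ)^[i] a)) p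
  have := Fintype.linearIndependent_iff.mp li (fun _ => (1 : K)) hsum
    ⟨0, hp.pos⟩
  exact one_ne_zero this
end

section
/- Let p be a prime, k a field of characteristic p, S a set, and σ : S → S a map with σ^p = id. Let k[S] be the free k-module on S with the induced k-linear action of σ, and let N = 1 + σ + … + σ^{p−1} acting on k[S]. Then the k-linear map k[S^σ] → ker(1−σ)/im(N) sending a fixed basis element s ∈ S^σ to the class of s is an isomorphism, and likewise the k-linear map k[S^σ] → ker(N)/im(1−σ) sending s ∈ S^σ to the class of s is an isomorphism. -/
open Finsupp Finset Function
open scoped Classical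

section
variable {p : ℕ} {k : Type*} [Field k] [CharP k p] {S : Type*} {σ : S → S}

lemma tfm_inj (hp : p.Prime) (hσ : ∀ s, σ^[p] s = s) : Function.Injective σ := by
  have h : σ^[p] = σ^[p-1] ∘ σ := by
    conv_lhs => rw [← Nat.sub_add_cancel hp.pos]
    rw [Function.iterate_succ]
  have hid : Function.Injective (σ^[p]) := by
    have : σ^[p] = id := funext hσ
    rw [this]; exact injective_id
  rw [h] at hid
  exact Function.Injective.of_comp hid

lemma tfm_iter_inj (hp : p.Prime) (hσ : ∀ s, σ^[p] s = s) (i : ℕ) :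
    Function.Injective (σ^[i]) := (tfm_inj hp hσ).iterate i

-- fixed point not, derive
lemma tfm_fix_of_d (hp : p.Prime) (hσ : ∀ s, σ^[p] s = s) {s : S} {d : ℕ}
    (hd0 : 0 < d) (hdp : d < p) (hd : σ^[d] s = s) : σ s = s := by
  haveI : Fact p.Prime := ⟨hp⟩
  have hnd : ¬ (p ∣ d) := Nat.not_dvd_of_pos_of_lt hd0 hdp
  have hdz : (d : ZMod p) ≠ 0 := by
    rwa [Ne, ZMod.natCast_eq_zero_iff]
  set x := ((d : ZMod p)⁻¹).val with hx
  have hcast : ((d * x : ℕ) : ZMod p) = 1 := by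
    push_cast [hx]
    rw [ZMod.natCast_val, ZMod.cast_id]
    exact mul_inv_cancel₀ hdz
  have hmod : (d * x) % p = 1 := by
    have := congrArg ZMod.val hcast
    rwa [ZMod.val_natCast, ZMod.val_one] at this
  have hdecomp : d * x = p * ((d * x) / p) + 1 := by
    conv_lhs => rw [← Nat.div_add_mod (d * x) p]
    rw [hmod]
  have h1 : σ^[d * x] s = s := by
    rw [Function.iterate_mul]
    exact Function.iterate_fixed hd x
  have h2 : σ^[p * ((d * x) / p)] s = s := by
    rw [Function.iterate_mul]
    exact Function.iterate_fixed (hσ s) _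
  calc σ s = σ (σ^[p * ((d*x)/p)] s) := by rw [h2]
    _ = σ^[p * ((d*x)/p) + 1] s := (Function.iterate_succ_apply' σ _ s).symm
    _ = σ^[d * x] s := by rw [← hdecomp]
    _ = s := h1

lemma tfm_orb_dist (hp : p.Prime) (hσ : ∀ s, σ^[p] s = s) {s : S} (hs : σ s ≠ s) :
    ∀ i < p, ∀ j < p, σ^[i] s = σ^[j] s → i = j := by
  have key : ∀ i j, i ≤ j → j < p → σ^[i] s = σ^[j] s → i = j := by
    intro i j hij hjp h
    by_contra hne
    have hd0 : 0 < j - i := Nat.sub_pos_of_lt (lt_of_le_of_ne hij hne)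
    have hdp : j - i < p := lt_of_le_of_lt (Nat.sub_le _ _) hjp
    have : σ^[i] (σ^[j-i] s) = σ^[i] s := by
      rw [← Function.iterate_add_apply, Nat.add_sub_cancel' hij, h]
    have := tfm_iter_inj hp hσ i this
    exact hs (tfm_fix_of_d hp hσ hd0 hdp this)
  intro i hi j hj h
  rcases le_total i j with hle | hle
  · exact key i j hle hj h
  · exact (key j i hle hi h.symm).symm
lemma tfm_sum_single_eval {n : ℕ} {g : ℕ → S} (c : ℕ → k)
    (hg : ∀ i < n, ∀ j < n, g i = g j → i = j) {j : ℕ} (hj : j < n) :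
    (∑ i ∈ range n, Finsupp.single (g i) (c i)) (g j) = c j := by
  rw [Finsupp.finset_sum_apply]
  rw [Finset.sum_eq_single_of_mem j (Finset.mem_range.2 hj)]
  · simp [Finsupp.single_apply]
  · intro i hi hij
    rw [Finsupp.single_apply, if_neg]
    intro h
    exact hij (hg i (Finset.mem_range.1 hi) j hj h)

lemma tfm_sum_single_eval_ne {n : ℕ} {g : ℕ → S} (c : ℕ → k) {t : S}
    (ht : ∀ i < n, g i ≠ t) :
    (∑ i ∈ range n, Finsupp.single (g i) (c i)) t = 0 := by
  rw [Finsupp.finset_sum_apply]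
  apply Finset.sum_eq_zero
  intro i hi
  rw [Finsupp.single_apply, if_neg (ht i (Finset.mem_range.1 hi))]

-- shift lemma
lemma tfm_shift {M : Type*} [AddCommGroup M] (g : ℕ → M) (h : g p = g 0) :
    ∑ i ∈ range p, g (i + 1) = ∑ i ∈ range p, g i := by
  have h1 : ∑ i ∈ range (p+1), g i = ∑ i ∈ range p, g (i+1) + g 0 :=
    Finset.sum_range_succ' g p
  have h2 : ∑ i ∈ range (p+1), g i = ∑ i ∈ range p, g i + g p :=
    Finset.sum_range_succ g p
  rw [h1, h] at h2
  exact add_right_cancel h2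

lemma tfm_mapDomain_iter_succ (w : S →₀ k) (i : ℕ) :
    Finsupp.mapDomain (σ^[i]) (Finsupp.mapDomain σ w) = Finsupp.mapDomain (σ^[i+1]) w := by
  rw [← Finsupp.mapDomain_comp, ← Function.iterate_succ]

lemma tfm_mapDomain_iter_succ' (w : S →₀ k) (i : ℕ) :
    Finsupp.mapDomain σ (Finsupp.mapDomain (σ^[i]) w) = Finsupp.mapDomain (σ^[i+1]) w := by
  rw [← Finsupp.mapDomain_comp, ← Function.iterate_succ']

set_option linter.unusedSectionVars false in
lemma tfm_mapDomain_p (hσ : ∀ s, σ^[p] s = s) (w : S →₀ k) :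
    Finsupp.mapDomain (σ^[p]) w = w := by
  have : σ^[p] = id := funext hσ
  rw [this, Finsupp.mapDomain_id]

-- N is σ-invariant under precomposition: N (σ w) = N w
lemma tfm_N_sigma (hσ : ∀ s, σ^[p] s = s) (w : S →₀ k) :
    ∑ i ∈ range p, Finsupp.mapDomain (σ^[i]) (Finsupp.mapDomain σ w) =
      ∑ i ∈ range p, Finsupp.mapDomain (σ^[i]) w := by
  have := tfm_shift (fun i => Finsupp.mapDomain (σ^[i]) w)
    (by show Finsupp.mapDomain (σ^[p]) w = Finsupp.mapDomain (σ^[0]) w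
        rw [tfm_mapDomain_p hσ]; simp)
  simpa [tfm_mapDomain_iter_succ] using this

-- σ (N w) = N w
lemma tfm_sigma_N (hσ : ∀ s, σ^[p] s = s) (w : S →₀ k) :
    Finsupp.mapDomain σ (∑ i ∈ range p, Finsupp.mapDomain (σ^[i]) w) =
      ∑ i ∈ range p, Finsupp.mapDomain (σ^[i]) w := by
  rw [Finsupp.mapDomain_finset_sum]
  have := tfm_shift (fun i => Finsupp.mapDomain (σ^[i]) w)
    (by show Finsupp.mapDomain (σ^[p]) w = Finsupp.mapDomain (σ^[0]) w
        rw [tfm_mapDomain_p hσ]; simp)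
  calc ∑ i ∈ range p, Finsupp.mapDomain σ (Finsupp.mapDomain (σ^[i]) w)
      = ∑ i ∈ range p, Finsupp.mapDomain (σ^[i+1]) w := by
        simp [tfm_mapDomain_iter_succ']
    _ = ∑ i ∈ range p, Finsupp.mapDomain (σ^[i]) w := this

-- N (w - σ w) = 0
lemma tfm_N_sub (hσ : ∀ s, σ^[p] s = s) (w : S →₀ k) :
    ∑ i ∈ range p, Finsupp.mapDomain (σ^[i]) (w - Finsupp.mapDomain σ w) = 0 := by
  have hsub : ∀ i, Finsupp.mapDomain (σ^[i]) (w - Finsupp.mapDomain σ w) =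
      Finsupp.mapDomain (σ^[i]) w - Finsupp.mapDomain (σ^[i]) (Finsupp.mapDomain σ w) := by
    intro i
    have h := map_sub (Finsupp.mapDomain.addMonoidHom (M := k) (σ^[i])) w (Finsupp.mapDomain σ w)
    simpa [Finsupp.mapDomain.addMonoidHom] using h
  simp only [hsub]
  rw [Finset.sum_sub_distrib, tfm_N_sigma hσ, sub_self]
lemma tfm_mapDomain_sub (f : S → S) (u v : S →₀ k) :
    Finsupp.mapDomain f (u - v) = Finsupp.mapDomain f u - Finsupp.mapDomain f v := by
  have h := map_sub (Finsupp.mapDomain.addMonoidHom (M := k) f) u v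
  simpa [Finsupp.mapDomain.addMonoidHom] using h

lemma tfm_N_sub_distrib (u r : S →₀ k) :
    ∑ i ∈ range p, Finsupp.mapDomain (σ^[i]) (u - r) =
      (∑ i ∈ range p, Finsupp.mapDomain (σ^[i]) u) -
        ∑ i ∈ range p, Finsupp.mapDomain (σ^[i]) r := by
  simp only [tfm_mapDomain_sub]
  exact Finset.sum_sub_distrib ..

lemma tfm_psmul (x : S →₀ k) : p • x = 0 := by
  rw [← Nat.cast_smul_eq_nsmul k, CharP.cast_eq_zero, zero_smul]

set_option linter.unusedSectionVars false in
lemma tfm_fix_apply (hp : p.Prime) (hσ : ∀ s, σ^[p] s = s) {u : S →₀ k}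
    (hu : Finsupp.mapDomain σ u = u) (t : S) : u (σ t) = u t := by
  conv_lhs => rw [← hu]
  exact Finsupp.mapDomain_apply (tfm_inj hp hσ) u t

set_option linter.unusedSectionVars false in
lemma tfm_fix_iter (hp : p.Prime) (hσ : ∀ s, σ^[p] s = s) {u : S →₀ k}
    (hu : Finsupp.mapDomain σ u = u) (s : S) (j : ℕ) : u (σ^[j] s) = u s := by
  induction j with
  | zero => rfl
  | succ j ih => rw [Function.iterate_succ_apply', tfm_fix_apply hp hσ hu, ih]

-- N of a single at a fixed point is zero
lemma tfm_N_single_fix (hσ : ∀ s, σ^[p] s = s) {s : S} (hs : σ s = s) (c : k) :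
    ∑ i ∈ range p, Finsupp.mapDomain (σ^[i]) (Finsupp.single s c) = 0 := by
  have h : ∀ i, Finsupp.mapDomain (σ^[i]) (Finsupp.single s c) = Finsupp.single s c := by
    intro i
    rw [Finsupp.mapDomain_single, Function.iterate_fixed hs]
  simp only [h]
  rw [Finset.sum_const, Finset.card_range, tfm_psmul]

-- T⁰ surjectivity
lemma tfm_surj0 (hp : p.Prime) (hσ : ∀ s, σ^[p] s = s) :
    ∀ (n : ℕ) (u : S →₀ k), u.support.card ≤ n → Finsupp.mapDomain σ u = u →
      ∃ (v : {s : S // σ s = s} →₀ k) (w : S →₀ k),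
        u = Finsupp.mapDomain (Subtype.val : {s : S // σ s = s} → S) v +
          ∑ i ∈ Finset.range p, Finsupp.mapDomain (σ^[i]) w := by
  intro n
  induction n with
  | zero =>
    intro u hcard _
    have : u = 0 := by
      rw [← Finsupp.support_eq_empty, ← Finset.card_eq_zero]; omega
    exact ⟨0, 0, by simp [this]⟩
  | succ n ih =>
    intro u hcard hu
    by_cases hu0 : u = 0
    · exact ⟨0, 0, by simp [hu0]⟩
    obtain ⟨s, hs⟩ := Finsupp.support_nonempty_iff.2 hu0
    by_cases hfix : σ s = s
    · -- fixed point
      obtain ⟨c, hc0⟩ : ∃ c, u s = c := ⟨u s, rfl⟩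
      set u' := u - Finsupp.single s c with hu'
      have hfix' : Finsupp.mapDomain σ u' = u' := by
        rw [hu', tfm_mapDomain_sub, hu, Finsupp.mapDomain_single, hfix]
      have hsupp : u'.support ⊆ u.support.erase s := by
        intro t ht
        rw [Finsupp.mem_support_iff] at ht
        rcases eq_or_ne t s with rfl | hts
        · exfalso; apply ht; simp [hu', hc0]
        · rw [Finset.mem_erase, Finsupp.mem_support_iff]
          refine ⟨hts, ?_⟩
          intro h0
          apply ht
          simp [hu', Finsupp.single_apply, (Ne.symm hts), h0]
      have hc : u'.support.card ≤ n := by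
        have := Finset.card_le_card hsupp
        rw [Finset.card_erase_of_mem hs] at this
        omega
      obtain ⟨v, w, hvw⟩ := ih u' hc hfix'
      refine ⟨v + Finsupp.single ⟨s, hfix⟩ c, w, ?_⟩
      rw [Finsupp.mapDomain_add, Finsupp.mapDomain_single]
      have : u = u' + Finsupp.single s c := by rw [hu']; abel
      rw [this, hvw]; abel
    · -- non-fixed point: subtract N (single s (u s))
      obtain ⟨c, hc0⟩ : ∃ c, u s = c := ⟨u s, rfl⟩
      set r := ∑ i ∈ range p, Finsupp.mapDomain (σ^[i]) (Finsupp.single s c) with hr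
      have hrs : r = ∑ i ∈ range p, Finsupp.single (σ^[i] s) ((fun _ => c) i) := by
        rw [hr]; simp [Finsupp.mapDomain_single]
      have hdist := tfm_orb_dist hp hσ hfix
      set u' := u - r with hu'
      have hfix' : Finsupp.mapDomain σ u' = u' := by
        rw [hu', tfm_mapDomain_sub, hu, hr, tfm_sigma_N hσ]
      have horb : ∀ j < p, u' (σ^[j] s) = 0 := by
        intro j hj
        rw [hu', Finsupp.sub_apply, hrs,
          tfm_sum_single_eval (g := fun i => σ^[i] s) (fun _ => c) hdist hj,
          tfm_fix_iter hp hσ hu]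
        simp [← hc0]
      have hsupp : u'.support ⊆ u.support.erase s := by
        intro t ht
        rw [Finsupp.mem_support_iff] at ht
        by_cases hex : ∃ j < p, σ^[j] s = t
        · obtain ⟨j, hj, rfl⟩ := hex
          exact absurd (horb j hj) ht
        · push_neg at hex
          have hrt : r t = 0 := by
            rw [hrs]; exact tfm_sum_single_eval_ne (g := fun i => σ^[i] s) _ hex
          have hut : u t ≠ 0 := by
            intro h0; apply ht; rw [hu', Finsupp.sub_apply, hrt, h0, sub_zero]
          have hts : t ≠ s := by
            intro h0
            exact hex 0 hp.pos (by simp [h0])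
          rw [Finset.mem_erase, Finsupp.mem_support_iff]
          exact ⟨hts, hut⟩
      have hcd : u'.support.card ≤ n := by
        have := Finset.card_le_card hsupp
        rw [Finset.card_erase_of_mem hs] at this
        omega
      obtain ⟨v, w, hvw⟩ := ih u' hcd hfix'
      refine ⟨v, w + Finsupp.single s c, ?_⟩
      have hsum : ∑ i ∈ range p, Finsupp.mapDomain (σ^[i]) (w + Finsupp.single s c) =
          (∑ i ∈ range p, Finsupp.mapDomain (σ^[i]) w) + r := by
        rw [hr, ← Finset.sum_add_distrib]
        exact Finset.sum_congr rfl fun i _ => Finsupp.mapDomain_add ..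
      rw [hsum]
      have : u = u' + r := by rw [hu']; abel
      rw [this, hvw]; abel
lemma tfm_orbit_sum (hp : p.Prime) (hσ : ∀ s, σ^[p] s = s) {u : S →₀ k}
    (hNu : (∑ i ∈ range p, Finsupp.mapDomain (σ^[i]) u) = 0) (s : S) :
    ∑ j ∈ range p, u (σ^[j] s) = 0 := by
  have h := congrArg (fun f : S →₀ k => f (σ^[p-1] s)) hNu
  simp only [Finsupp.finset_sum_apply, Finsupp.coe_zero, Pi.zero_apply] at h
  have heach : ∀ i ∈ range p, (Finsupp.mapDomain (σ^[i]) u) (σ^[p-1] s) =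
      u (σ^[p-1-i] s) := by
    intro i hi
    rw [Finset.mem_range] at hi
    have hi' : i ≤ p - 1 := by omega
    have heq : σ^[p-1] s = σ^[i] (σ^[p-1-i] s) := by
      rw [← Function.iterate_add_apply, Nat.add_sub_cancel' hi']
    rw [heq, Finsupp.mapDomain_apply (tfm_iter_inj hp hσ i)]
  rw [Finset.sum_congr rfl heach] at h
  rw [← Finset.sum_range_reflect (fun j => u (σ^[j] s)) p]
  exact h

lemma tfm_telescope (hp : p.Prime) (hσ : ∀ s, σ^[p] s = s) {s : S} (hfix : σ s ≠ s)
    (a : ℕ → k) (ha : ∑ j ∈ range p, a j = 0) :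
    (∑ i ∈ range p, Finsupp.single (σ^[i] s) (∑ j ∈ range (i+1), a j)) -
      Finsupp.mapDomain σ
        (∑ i ∈ range p, Finsupp.single (σ^[i] s) (∑ j ∈ range (i+1), a j)) =
      ∑ i ∈ range p, Finsupp.single (σ^[i] s) (a i) := by
  set b : ℕ → k := fun i => ∑ j ∈ range (i+1), a j with hb
  have hσw : Finsupp.mapDomain σ (∑ i ∈ range p, Finsupp.single (σ^[i] s) (b i)) =
      ∑ i ∈ range p, Finsupp.single (σ^[i+1] s) (b i) := by
    rw [Finsupp.mapDomain_finset_sum]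
    exact Finset.sum_congr rfl fun i _ => by
      rw [Finsupp.mapDomain_single, Function.iterate_succ_apply']
  have hdist := tfm_orb_dist hp hσ hfix
  have hdist' : ∀ i < p, ∀ j < p, σ^[i+1] s = σ^[j+1] s → i = j := by
    intro i hi j hj h
    rw [Function.iterate_succ_apply', Function.iterate_succ_apply'] at h
    exact hdist i hi j hj (tfm_inj hp hσ h)
  rw [hσw]
  ext t
  rw [Finsupp.sub_apply]
  by_cases hex : ∃ j < p, σ^[j] s = t
  · obtain ⟨j, hj, rfl⟩ := hex
    rw [tfm_sum_single_eval (g := fun i => σ^[i] s) b hdist hj,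
      tfm_sum_single_eval (g := fun i => σ^[i] s) a hdist hj]
    rcases Nat.eq_zero_or_pos j with rfl | hj0
    · have hps : σ^[(p-1)+1] s = σ^[0] s := by
        rw [Nat.sub_add_cancel hp.pos]
        exact hσ s
      have hval : (∑ i ∈ range p, Finsupp.single (σ^[i+1] s) (b i)) (σ^[0] s) =
          b (p-1) := by
        rw [← hps]
        exact tfm_sum_single_eval (g := fun i => σ^[i+1] s) b hdist'
          (by omega : p - 1 < p)
      rw [hval]
      have hbp : b (p-1) = 0 := by
        rw [hb]
        simpa [Nat.sub_add_cancel hp.pos] using ha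
      rw [hbp, sub_zero, hb]
      simp
    · have hj1 : j - 1 < p := by omega
      have hjj : σ^[(j-1)+1] s = σ^[j] s := by rw [Nat.sub_add_cancel hj0]
      have hval : (∑ i ∈ range p, Finsupp.single (σ^[i+1] s) (b i)) (σ^[j] s) =
          b (j-1) := by
        rw [← hjj]
        exact tfm_sum_single_eval (g := fun i => σ^[i+1] s) b hdist' hj1
      rw [hval]
      have hbj : b j = b (j-1) + a j := by
        rw [hb]
        have h1 : j - 1 + 1 = j := Nat.sub_add_cancel hj0
        simp only []
        rw [h1, ← Finset.sum_range_succ]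
      rw [hbj]
      ring
  · push_neg at hex
    have hex' : ∀ i < p, σ^[i+1] s ≠ t := by
      intro i hi h
      rcases Nat.lt_or_ge (i+1) p with h1 | h1
      · exact hex (i+1) h1 h
      · have h2 : i + 1 = p := by omega
        rw [h2] at h
        apply hex 0 hp.pos
        rw [Function.iterate_zero_apply, ← h, hσ s]
    rw [tfm_sum_single_eval_ne (g := fun i => σ^[i] s) b hex,
      tfm_sum_single_eval_ne (g := fun i => σ^[i] s) a hex,
      tfm_sum_single_eval_ne (g := fun i => σ^[i+1] s) b hex']
    simp

-- T¹ surjectivity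
lemma tfm_surj1 (hp : p.Prime) (hσ : ∀ s, σ^[p] s = s) :
    ∀ (n : ℕ) (u : S →₀ k), u.support.card ≤ n →
      (∑ i ∈ Finset.range p, Finsupp.mapDomain (σ^[i]) u) = 0 →
      ∃ (v : {s : S // σ s = s} →₀ k) (w : S →₀ k),
        u = Finsupp.mapDomain (Subtype.val : {s : S // σ s = s} → S) v +
          (w - Finsupp.mapDomain σ w) := by
  intro n
  induction n with
  | zero =>
    intro u hcard _
    have : u = 0 := by
      rw [← Finsupp.support_eq_empty, ← Finset.card_eq_zero]; omega
    exact ⟨0, 0, by simp [this]⟩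
  | succ n ih =>
    intro u hcard hNu
    by_cases hu0 : u = 0
    · exact ⟨0, 0, by simp [hu0]⟩
    obtain ⟨s, hs⟩ := Finsupp.support_nonempty_iff.2 hu0
    by_cases hfix : σ s = s
    · -- fixed point
      obtain ⟨c, hc0⟩ : ∃ c, u s = c := ⟨u s, rfl⟩
      set u' := u - Finsupp.single s c with hu'
      have hN' : (∑ i ∈ range p, Finsupp.mapDomain (σ^[i]) u') = 0 := by
        rw [hu', tfm_N_sub_distrib, hNu, tfm_N_single_fix hσ hfix, sub_zero]
      have hsupp : u'.support ⊆ u.support.erase s := by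
        intro t ht
        rw [Finsupp.mem_support_iff] at ht
        rcases eq_or_ne t s with rfl | hts
        · exfalso; apply ht; simp [hu', hc0]
        · rw [Finset.mem_erase, Finsupp.mem_support_iff]
          refine ⟨hts, ?_⟩
          intro h0
          apply ht
          simp [hu', Finsupp.single_apply, (Ne.symm hts), h0]
      have hc : u'.support.card ≤ n := by
        have := Finset.card_le_card hsupp
        rw [Finset.card_erase_of_mem hs] at this
        omega
      obtain ⟨v, w, hvw⟩ := ih u' hc hN'
      refine ⟨v + Finsupp.single ⟨s, hfix⟩ c, w, ?_⟩
      rw [Finsupp.mapDomain_add, Finsupp.mapDomain_single]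
      have : u = u' + Finsupp.single s c := by rw [hu']; abel
      rw [this, hvw]; abel
    · -- non-fixed point
      have ha : ∑ j ∈ range p, u (σ^[j] s) = 0 := tfm_orbit_sum hp hσ hNu s
      set a : ℕ → k := fun i => u (σ^[i] s) with haa
      set w₁ : S →₀ k :=
        ∑ i ∈ range p, Finsupp.single (σ^[i] s) (∑ j ∈ range (i+1), a j) with hw₁
      set r : S →₀ k := ∑ i ∈ range p, Finsupp.single (σ^[i] s) (a i) with hr
      have htel : w₁ - Finsupp.mapDomain σ w₁ = r := tfm_telescope hp hσ hfix a ha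
      have hNr : (∑ i ∈ range p, Finsupp.mapDomain (σ^[i]) r) = 0 := by
        rw [← htel]
        exact tfm_N_sub hσ w₁
      have hdist := tfm_orb_dist hp hσ hfix
      set u' := u - r with hu'
      have hN' : (∑ i ∈ range p, Finsupp.mapDomain (σ^[i]) u') = 0 := by
        rw [hu', tfm_N_sub_distrib, hNu, hNr, sub_zero]
      have horb : ∀ j < p, u' (σ^[j] s) = 0 := by
        intro j hj
        rw [hu', Finsupp.sub_apply, hr,
          tfm_sum_single_eval (g := fun i => σ^[i] s) a hdist hj, haa]
        simp
      have hsupp : u'.support ⊆ u.support.erase s := by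
        intro t ht
        rw [Finsupp.mem_support_iff] at ht
        by_cases hex : ∃ j < p, σ^[j] s = t
        · obtain ⟨j, hj, rfl⟩ := hex
          exact absurd (horb j hj) ht
        · push_neg at hex
          have hrt : r t = 0 := by
            rw [hr]; exact tfm_sum_single_eval_ne (g := fun i => σ^[i] s) _ hex
          have hut : u t ≠ 0 := by
            intro h0; apply ht; rw [hu', Finsupp.sub_apply, hrt, h0, sub_zero]
          have hts : t ≠ s := by
            intro h0
            exact hex 0 hp.pos (by simp [h0])
          rw [Finset.mem_erase, Finsupp.mem_support_iff]
          exact ⟨hts, hut⟩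
      have hcd : u'.support.card ≤ n := by
        have := Finset.card_le_card hsupp
        rw [Finset.card_erase_of_mem hs] at this
        omega
      obtain ⟨v, w, hvw⟩ := ih u' hcd hN'
      refine ⟨v, w + w₁, ?_⟩
      rw [Finsupp.mapDomain_add]
      have : u = u' + r := by rw [hu']; abel
      rw [this, hvw, ← htel]
      abel
end


/--
Let `p` be a prime, `k` a field of characteristic `p`, `S` a set and `σ : S → S` with
`σ^p = id`.  Let `k[S] = S →₀ k` with the induced action `T = mapDomain σ` and norm
`N = ∑_{i<p} mapDomain σ^i`, and let `Φ : k[S^σ] → k[S]` be induced by the inclusion of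
the fixed-point set.  Then `Φ` descends to `k`-linear isomorphisms
`k[S^σ] ≅ ker(1−T)/im N` and `k[S^σ] ≅ ker N/im(1−T)`, sending a fixed basis element `s`
to the class of `s`.  This is expressed below elementwise: `Φ` lands in the relevant
kernel, is injective modulo the relevant image, and is surjective modulo it.
-/
theorem tate_free_module_on_set
    (p : ℕ) (hp : p.Prime)
    (k : Type*) [Field k] [CharP k p]
    (S : Type*) (σ : S → S) (hσ : ∀ s, σ^[p] s = s) :
    -- T⁰ : basis vectors of fixed points are in ker(1−σ)
    ((∀ v : {s : S // σ s = s} →₀ k,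
        Finsupp.mapDomain σ (Finsupp.mapDomain Subtype.val v) =
          Finsupp.mapDomain (Subtype.val : {s : S // σ s = s} → S) v)
    -- T⁰ : injectivity modulo the image of N
    ∧ (∀ v : {s : S // σ s = s} →₀ k,
        (∃ w : S →₀ k, Finsupp.mapDomain (Subtype.val : {s : S // σ s = s} → S) v =
            ∑ i ∈ Finset.range p, Finsupp.mapDomain (σ^[i]) w) → v = 0)
    -- T⁰ : surjectivity onto ker(1−σ) modulo the image of N
    ∧ (∀ u : S →₀ k, Finsupp.mapDomain σ u = u →
        ∃ (v : {s : S // σ s = s} →₀ k) (w : S →₀ k),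
          u = Finsupp.mapDomain (Subtype.val : {s : S // σ s = s} → S) v +
            ∑ i ∈ Finset.range p, Finsupp.mapDomain (σ^[i]) w)
    -- T¹ : basis vectors of fixed points are in ker N
    ∧ (∀ v : {s : S // σ s = s} →₀ k,
        (∑ i ∈ Finset.range p,
          Finsupp.mapDomain (σ^[i])
            (Finsupp.mapDomain (Subtype.val : {s : S // σ s = s} → S) v)) = 0)
    -- T¹ : injectivity modulo the image of 1−σ
    ∧ (∀ v : {s : S // σ s = s} →₀ k,
        (∃ w : S →₀ k, Finsupp.mapDomain (Subtype.val : {s : S // σ s = s} → S) v =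
            w - Finsupp.mapDomain σ w) → v = 0)
    -- T¹ : surjectivity onto ker N modulo the image of 1−σ
    ∧ (∀ u : S →₀ k, (∑ i ∈ Finset.range p, Finsupp.mapDomain (σ^[i]) u) = 0 →
        ∃ (v : {s : S // σ s = s} →₀ k) (w : S →₀ k),
          u = Finsupp.mapDomain (Subtype.val : {s : S // σ s = s} → S) v +
            (w - Finsupp.mapDomain σ w))) := by
  have hval : Function.Injective (Subtype.val : {s : S // σ s = s} → S) :=
    Subtype.val_injective
  refine ⟨?_, ?_, ?_, ?_, ?_, ?_⟩
  · -- (1) fixed basis vectors are σ-fixed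
    intro v
    rw [← Finsupp.mapDomain_comp]
    congr 1
    funext x
    exact x.2
  · -- (2) injectivity mod im N
    rintro v ⟨w, hw⟩
    ext x
    have h := congrArg (fun f : S →₀ k => f x.val) hw
    simp only [Finsupp.finset_sum_apply] at h
    rw [Finsupp.mapDomain_apply hval] at h
    have hterm : ∀ i ∈ Finset.range p,
        (Finsupp.mapDomain (σ^[i]) w) (x.val : S) = w x.val := by
      intro i _
      have hx : σ^[i] (x.val : S) = x.val := Function.iterate_fixed x.2 i
      calc (Finsupp.mapDomain (σ^[i]) w) (x.val : S)
          = (Finsupp.mapDomain (σ^[i]) w) (σ^[i] (x.val : S)) := by rw [hx]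
        _ = w x.val := Finsupp.mapDomain_apply (tfm_iter_inj hp hσ i) w _
    rw [Finset.sum_congr rfl hterm, Finset.sum_const, Finset.card_range,
      nsmul_eq_mul, CharP.cast_eq_zero k p, zero_mul] at h
    simpa using h
  · -- (3) surjectivity onto ker(1-σ) mod im N
    intro u hu
    exact tfm_surj0 hp hσ u.support.card u le_rfl hu
  · -- (4) fixed basis vectors are killed by N
    intro v
    have hterm : ∀ i ∈ Finset.range p,
        Finsupp.mapDomain (σ^[i])
          (Finsupp.mapDomain (Subtype.val : {s : S // σ s = s} → S) v) =
          Finsupp.mapDomain (Subtype.val : {s : S // σ s = s} → S) v := by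
      intro i _
      rw [← Finsupp.mapDomain_comp]
      congr 1
      funext x
      exact Function.iterate_fixed x.2 i
    rw [Finset.sum_congr rfl hterm, Finset.sum_const, Finset.card_range, tfm_psmul]
  · -- (5) injectivity mod im (1-σ)
    rintro v ⟨w, hw⟩
    ext x
    have h := congrArg (fun f : S →₀ k => f x.val) hw
    simp only [Finsupp.sub_apply] at h
    rw [Finsupp.mapDomain_apply hval] at h
    have hx : σ (x.val : S) = x.val := x.2
    have h2 : (Finsupp.mapDomain σ w) (x.val : S) = w x.val := by
      calc (Finsupp.mapDomain σ w) (x.val : S)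
          = (Finsupp.mapDomain σ w) (σ (x.val : S)) := by rw [hx]
        _ = w x.val := Finsupp.mapDomain_apply (tfm_inj hp hσ) w _
    rw [h2, sub_self] at h
    simpa using h
  · -- (6) surjectivity onto ker N mod im (1-σ)
    intro u hu
    exact tfm_surj1 hp hσ u.support.card u le_rfl hu
end

section
/- Let p be a prime, k a field of characteristic p, G a group, σ an automorphism of G with σ^p = id, and K a subgroup of G with σ(K) = K. Assume: (i) every double coset KgK (g ∈ G) is the union of finitely many left cosets xK, and likewise every double coset K^σhK^σ (h ∈ G^σ) is the union of finitely many left cosets xK^σ; and (ii) K is σ-plain, meaning the map G^σ/K^σ → (G/K)^σ, gK^σ ↦ gK, is bijective. Let H(G,K) be the k-algebra of functions h : G → k that are bi-K-invariant (h(k₁gk₂) = h(g) for k₁,k₂ ∈ K) and supported on finitely many double cosets, with convolution (h₁ * h₂)(g) = Σ_{xK ∈ G/K} h₁(x)·h₂(x^{-1}g), and let σ act on H(G,K) by (σ·h)(g) = h(σ^{-1}(g)). Define H(G^σ,K^σ) analogously. Then for every h in the subalgebra H(G,K)^σ of σ-invariant elements, the restriction h|_{G^σ} lies in H(G^σ,K^σ),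 and the restriction map Br : H(G,K)^σ → H(G^σ,K^σ), h ↦ h|_{G^σ}, is a homomorphism of k-algebras. -/
/-- A function `h : G → k` is bi-`K`-invariant if `h(k₁ g k₂) = h(g)` for `k₁, k₂ ∈ K`. -/
def IsBiInvariant {k G : Type*} [Group G] (K : Subgroup G) (h : G → k) : Prop :=
  ∀ k₁ k₂ g : G, k₁ ∈ K → k₂ ∈ K → h (k₁ * g * k₂) = h g

/-- A function `h : G → k` is supported on finitely many double cosets of `K`. -/
def HasFiniteDcosetSupport {k G : Type*} [Zero k] [Group G] (K : Subgroup G)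
    (h : G → k) : Prop :=
  Set.Finite ((fun g => {x : G | ∃ k₁ ∈ K, ∃ k₂ ∈ K, x = k₁ * g * k₂}) ''
    {g : G | h g ≠ 0})

/-- The convolution product on the Hecke algebra of `(G, K)`:
`(h₁ * h₂)(g) = ∑_{xK ∈ G/K} h₁(x)·h₂(x⁻¹ g)`. -/
noncomputable def heckeMul {k G : Type*} [Semiring k] [Group G] (K : Subgroup G)
    (h₁ h₂ : G → k) : G → k :=
  fun g => ∑ᶠ c : G ⧸ K, h₁ (Quotient.out c) * h₂ ((Quotient.out c)⁻¹ * g)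

/-- The fixed subgroup `G^σ` of an automorphism `σ` of a group `G`. -/
def fixedSubgroup {G : Type*} [Group G] (σ : G ≃* G) : Subgroup G where
  carrier := {g : G | σ g = g}
  one_mem' := map_one σ
  mul_mem' := by
    intro a b ha hb
    show σ (a * b) = a * b
    rw [map_mul, ha, hb]
  inv_mem' := by
    intro a ha
    show σ a⁻¹ = a⁻¹
    rw [map_inv, ha]

section BrauerAux

open Function

lemma brauer_aux_sum_nonfixed {k α : Type*} [Field k] {p : ℕ} [CharP k p]
    (hp : p.Prime) (e : Equiv.Perm α) (he : ∀ a, (⇑e)^[p] a = a)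
    (f : α → k) (hf : ∀ a, f (e a) = f a) :
    ∀ (n : ℕ) (T : Finset α), T.card ≤ n → (∀ a ∈ T, e a ∈ T) → (∀ a ∈ T, e a ≠ a) →
      ∑ a ∈ T, f a = 0 := by
  intro n
  induction n with
  | zero =>
    intro T h1 _ _
    rw [Finset.card_eq_zero.mp (Nat.le_zero.mp h1)]
    simp
  | succ n ih =>
    intro T hcard hstab hnf
    classical
    rcases T.eq_empty_or_nonempty with rfl | ⟨a, ha⟩
    · simp
    have hiterT : ∀ i, (⇑e)^[i] a ∈ T := by
      intro i
      induction i with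
      | zero => exact ha
      | succ i ihh => rw [Function.iterate_succ_apply']; exact hstab _ ihh
    have hiterf : ∀ i, f ((⇑e)^[i] a) = f a := by
      intro i
      induction i with
      | zero => rfl
      | succ i ihh => rw [Function.iterate_succ_apply', hf, ihh]
    have hq : ∀ (q : ℕ) (x : α), (⇑e)^[p * q] x = x := by
      intro q
      induction q with
      | zero => intro x; rfl
      | succ q ihh =>
        intro x
        rw [Nat.mul_succ, Function.iterate_add_apply, he, ihh]
    have hmod : ∀ m, (⇑e)^[m] a = (⇑e)^[m % p] a := by
      intro m
      calc (⇑e)^[m] a = (⇑e)^[p * (m / p) + m % p] a := by rw [Nat.div_add_mod]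
        _ = (⇑e)^[p * (m / p)] ((⇑e)^[m % p] a) := Function.iterate_add_apply ..
        _ = (⇑e)^[m % p] a := hq _ _
    have hper : Function.IsPeriodicPt ⇑e p a := he a
    have hmin : Function.minimalPeriod ⇑e a = p := by
      rcases hp.eq_one_or_self_of_dvd _ hper.minimalPeriod_dvd with h1 | h1
      · exact absurd (Function.minimalPeriod_eq_one_iff_isFixedPt.mp h1) (hnf a ha)
      · exact h1
    set O : Finset α := (Finset.range p).image (fun i => (⇑e)^[i] a) with hO
    have hOcard : O.card = p := by
      rw [hO, Finset.card_image_of_injOn, Finset.card_range]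
      intro i hi j hj hij
      exact Function.iterate_injOn_Iio_minimalPeriod
        (by simpa [hmin] using Finset.mem_range.mp hi)
        (by simpa [hmin] using Finset.mem_range.mp hj) hij
    have hOsub : O ⊆ T := by
      intro b hb
      obtain ⟨i, _, rfl⟩ := Finset.mem_image.mp hb
      exact hiterT i
    have hOsum : ∑ b ∈ O, f b = 0 := by
      have : ∑ b ∈ O, f b = ∑ b ∈ O, f a := by
        refine Finset.sum_congr rfl fun b hb => ?_
        obtain ⟨i, _, rfl⟩ := Finset.mem_image.mp hb
        exact hiterf i
      rw [this, Finset.sum_const, hOcard, nsmul_eq_mul, CharP.cast_eq_zero, zero_mul]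
    have hstab' : ∀ b ∈ T \ O, e b ∈ T \ O := by
      intro b hb
      rw [Finset.mem_sdiff] at hb ⊢
      refine ⟨hstab _ hb.1, fun hbO => hb.2 ?_⟩
      obtain ⟨i, hi, hieq⟩ := Finset.mem_image.mp hbO
      have : e ((⇑e)^[i + p - 1] a) = e b := by
        have h1 : i + p - 1 + 1 = i + p := by have := hp.pos; omega
        rw [← Function.iterate_succ_apply' e (i + p - 1) a]
        show (⇑e)^[i + p - 1 + 1] a = e b
        rw [h1, Function.iterate_add_apply, he, hieq]
      have hb' : b = (⇑e)^[i + p - 1] a := (e.injective this).symm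
      refine Finset.mem_image.mpr ⟨(i + p - 1) % p, Finset.mem_range.mpr (Nat.mod_lt _ hp.pos), ?_⟩
      rw [← hmod, hb']
    have hcard' : (T \ O).card ≤ n := by
      rw [Finset.card_sdiff_of_subset hOsub, hOcard]
      have := hp.pos
      omega
    have hrec := ih (T \ O) hcard' hstab' (fun b hb => hnf b (Finset.mem_sdiff.mp hb).1)
    calc ∑ a ∈ T, f a = ∑ b ∈ T \ O, f b + ∑ b ∈ O, f b := (Finset.sum_sdiff hOsub).symm
      _ = 0 := by rw [hrec, hOsum, zero_add]

lemma brauer_coset_support_finite {k G : Type*} [Zero k] [Group G] (K : Subgroup G)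
    (hfinG : ∀ g : G,
      {c : G ⧸ K | ∃ κ ∈ K, c = QuotientGroup.mk (κ * g)}.Finite)
    (h : G → k)
    (hd : Set.Finite ((fun g => {x : G | ∃ k₁ ∈ K, ∃ k₂ ∈ K, x = k₁ * g * k₂}) ''
      {g : G | h g ≠ 0})) :
    ((QuotientGroup.mk : G → G ⧸ K) '' {g : G | h g ≠ 0}).Finite := by
  set dset : G → Set G := fun g => {x : G | ∃ k₁ ∈ K, ∃ k₂ ∈ K, x = k₁ * g * k₂} with hdset
  have hcover : (QuotientGroup.mk : G → G ⧸ K) '' {g : G | h g ≠ 0} ⊆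
      ⋃ d ∈ (dset '' {g : G | h g ≠ 0}),
        {c : G ⧸ K | ∃ g : G, h g ≠ 0 ∧ dset g = d ∧ ∃ κ ∈ K, c = QuotientGroup.mk (κ * g)} := by
    rintro c ⟨g, hg, rfl⟩
    refine Set.mem_biUnion ⟨g, hg, rfl⟩ ⟨g, hg, rfl, 1, one_mem K, by rw [one_mul]⟩
  refine Set.Finite.subset (Set.Finite.biUnion hd ?_) hcover
  rintro d ⟨g₀, hg₀, rfl⟩
  refine Set.Finite.subset (hfinG g₀) ?_
  rintro c ⟨g, _, hdg, κ, hκ, rfl⟩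
  have hg_mem : g ∈ dset g₀ := by
    rw [← hdg]
    exact ⟨1, one_mem K, 1, one_mem K, by group⟩
  obtain ⟨k₁, hk₁, k₂, hk₂, rfl⟩ := hg_mem
  refine ⟨κ * k₁, mul_mem hκ hk₁, ?_⟩
  have heq : κ * (k₁ * g₀ * k₂) = (κ * k₁ * g₀) * k₂ := by group
  rw [heq, QuotientGroup.mk_mul_of_mem _ hk₂]

def brauerPerm {G : Type*} [Group G] (σ : G ≃* G) (K : Subgroup G)
    (hK : ∀ g : G, σ g ∈ K ↔ g ∈ K) : Equiv.Perm (G ⧸ K) where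
  toFun := Quotient.map' σ (fun a b hab => by
    rw [QuotientGroup.leftRel_apply] at hab ⊢
    rw [← map_inv, ← map_mul]
    exact (hK _).mpr hab)
  invFun := Quotient.map' σ.symm (fun a b hab => by
    rw [QuotientGroup.leftRel_apply] at hab ⊢
    rw [← map_inv, ← map_mul]
    have h2 := hK (σ.symm (a⁻¹ * b))
    rw [σ.apply_symm_apply] at h2
    exact h2.mp hab)
  left_inv := fun c => by
    induction c using QuotientGroup.induction_on with
    | H g => show QuotientGroup.mk (σ.symm (σ g)) = QuotientGroup.mk g; rw [σ.symm_apply_apply]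
  right_inv := fun c => by
    induction c using QuotientGroup.induction_on with
    | H g => show QuotientGroup.mk (σ (σ.symm g)) = QuotientGroup.mk g; rw [σ.apply_symm_apply]

lemma brauerPerm_mk {G : Type*} [Group G] (σ : G ≃* G) (K : Subgroup G)
    (hK : ∀ g : G, σ g ∈ K ↔ g ∈ K) (g : G) :
    brauerPerm σ K hK (QuotientGroup.mk g) = QuotientGroup.mk (σ g) := rfl

end BrauerAux

/--
Let `p` be a prime, `k` a field of characteristic `p`, `G` a group with an automorphism
`σ` of order dividing `p`, and `K ≤ G` a `σ`-stable subgroup.  Assume (i) that every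
double coset of `K` in `G` (resp. of `K^σ` in `G^σ`) is a finite union of left cosets,
and (ii) that `K` is `σ`-plain, i.e. `G^σ/K^σ → (G/K)^σ` is bijective (injectivity is
automatic; surjectivity is the displayed hypothesis).  Then the restriction to `G^σ` of
every `σ`-invariant element of the Hecke algebra `H(G,K)` lies in the Hecke algebra
`H(G^σ,K^σ)`, and restriction `Br : H(G,K)^σ → H(G^σ,K^σ)` is a `k`-algebra homomorphism
(it is additive, `k`-linear, unital, and multiplicative for convolution).
-/
theorem brauer_homomorphism_is_algebra_hom
    (p : ℕ) (hp : p.Prime)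
    (k : Type*) [Field k] [CharP k p]
    (G : Type*) [Group G]
    (σ : G ≃* G) (hσ : ∀ g, (⇑σ)^[p] g = g)
    (K : Subgroup G) (hK : ∀ g : G, σ g ∈ K ↔ g ∈ K)
    -- (i) every double coset of K is a finite union of left cosets, in G and in G^σ
    (hfinG : ∀ g : G,
      {c : G ⧸ K | ∃ κ ∈ K, c = QuotientGroup.mk (κ * g)}.Finite)
    (hfinH : ∀ g : ↥(fixedSubgroup σ),
      {c : ↥(fixedSubgroup σ) ⧸ K.subgroupOf (fixedSubgroup σ) |
        ∃ κ ∈ K.subgroupOf (fixedSubgroup σ), c = QuotientGroup.mk (κ * g)}.Finite)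
    -- (ii) K is σ-plain
    (hplain : ∀ g : G, g⁻¹ * σ g ∈ K →
      ∃ g₀ : G, σ g₀ = g₀ ∧ g₀⁻¹ * g ∈ K) :
    -- restriction of a σ-invariant Hecke element is a Hecke element for (G^σ, K^σ)
    ((∀ h : G → k, IsBiInvariant K h → HasFiniteDcosetSupport K h →
        (∀ g, h (σ g) = h g) →
        IsBiInvariant (K.subgroupOf (fixedSubgroup σ))
          (fun x : ↥(fixedSubgroup σ) => h ↑x) ∧
        HasFiniteDcosetSupport (K.subgroupOf (fixedSubgroup σ))
          (fun x : ↥(fixedSubgroup σ) => h ↑x))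
    -- restriction is additive
    ∧ (∀ h₁ h₂ : G → k,
        (fun x : ↥(fixedSubgroup σ) => (h₁ + h₂) ↑x) =
          (fun x : ↥(fixedSubgroup σ) => h₁ ↑x) +
            fun x : ↥(fixedSubgroup σ) => h₂ ↑x)
    -- restriction is k-linear
    ∧ (∀ (c : k) (h : G → k),
        (fun x : ↥(fixedSubgroup σ) => (c • h) ↑x) =
          c • fun x : ↥(fixedSubgroup σ) => h ↑x)
    -- restriction sends the unit (the indicator function of K) to the unit
    ∧ (∀ x : ↥(fixedSubgroup σ),
        Set.indicator (K : Set G) (fun _ => (1 : k)) ↑x =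
          Set.indicator (K.subgroupOf (fixedSubgroup σ) : Set ↥(fixedSubgroup σ))
            (fun _ => (1 : k)) x)
    -- restriction is multiplicative for convolution
    ∧ (∀ h₁ h₂ : G → k,
        IsBiInvariant K h₁ → HasFiniteDcosetSupport K h₁ → (∀ g, h₁ (σ g) = h₁ g) →
        IsBiInvariant K h₂ → HasFiniteDcosetSupport K h₂ → (∀ g, h₂ (σ g) = h₂ g) →
        ∀ x : ↥(fixedSubgroup σ),
          heckeMul K h₁ h₂ (↑x) =
            heckeMul (K.subgroupOf (fixedSubgroup σ))
              (fun y : ↥(fixedSubgroup σ) => h₁ ↑y)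
              (fun y : ↥(fixedSubgroup σ) => h₂ ↑y) x)) := by
  classical
  set Gσ := fixedSubgroup σ with hGσ
  set Kσ := K.subgroupOf Gσ with hKσdef
  -- the comparison map on quotients
  set Φ : (Gσ ⧸ Kσ) → (G ⧸ K) := fun q => QuotientGroup.mk (↑(Quotient.out q) : G) with hΦ
  have hΦmk : ∀ y : Gσ, Φ (QuotientGroup.mk y) = QuotientGroup.mk (↑y : G) := by
    intro y
    obtain ⟨κ, hκ⟩ := QuotientGroup.mk_out_eq_mul Kσ y
    show QuotientGroup.mk (↑(Quotient.out (QuotientGroup.mk y)) : G) = QuotientGroup.mk (↑y : G)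
    rw [hκ]
    have hcoe : ((y * ↑κ : Gσ) : G) = (↑y : G) * ((↑κ : Gσ) : G) := rfl
    rw [hcoe]
    exact QuotientGroup.mk_mul_of_mem _ (Subgroup.mem_subgroupOf.mp κ.2)
  have hΦinj : Function.Injective Φ := by
    intro q q' hqq
    have h1 : (↑(Quotient.out q) : G)⁻¹ * ↑(Quotient.out q') ∈ K := QuotientGroup.eq.mp hqq
    have h2 : (Quotient.out q)⁻¹ * Quotient.out q' ∈ Kσ :=
      Subgroup.mem_subgroupOf.mpr h1
    calc q = QuotientGroup.mk (Quotient.out q) := (QuotientGroup.out_eq' q).symm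
      _ = QuotientGroup.mk (Quotient.out q') := QuotientGroup.eq.mpr h2
      _ = q' := QuotientGroup.out_eq' q'
  refine ⟨?_, ?_, ?_, ?_, ?_⟩
  · -- restriction preserves the Hecke conditions
    intro h hbi hd hinv
    constructor
    · intro k₁ k₂ g hk₁ hk₂
      show h ↑(k₁ * g * k₂) = h ↑g
      have hcoe : ((k₁ * g * k₂ : Gσ) : G) = (↑k₁ : G) * ↑g * ↑k₂ := rfl
      rw [hcoe]
      exact hbi _ _ _ (Subgroup.mem_subgroupOf.mp hk₁) (Subgroup.mem_subgroupOf.mp hk₂)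
    · have hL := brauer_coset_support_finite K hfinG h hd
      have hmkfin : ((QuotientGroup.mk : Gσ → Gσ ⧸ Kσ) '' {x : Gσ | h ↑x ≠ 0}).Finite := by
        refine Set.Finite.of_finite_image (f := Φ) (hL.subset ?_) hΦinj.injOn
        rintro _ ⟨_, ⟨y, hy, rfl⟩, rfl⟩
        exact ⟨(↑y : G), hy, (hΦmk y).symm⟩
      have himg : (fun g => {x : Gσ | ∃ k₁ ∈ Kσ, ∃ k₂ ∈ Kσ, x = k₁ * g * k₂}) ''
            {x : Gσ | h ↑x ≠ 0} =
          (fun q => {x : Gσ | ∃ k₁ ∈ Kσ, ∃ k₂ ∈ Kσ, x = k₁ * (Quotient.out q) * k₂}) ''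
            ((QuotientGroup.mk : Gσ → Gσ ⧸ Kσ) '' {x : Gσ | h ↑x ≠ 0}) := by
        rw [← Set.image_comp]
        refine Set.image_congr fun y _ => ?_
        obtain ⟨κ, hκ⟩ := QuotientGroup.mk_out_eq_mul Kσ y
        show _ = {x : Gσ | ∃ k₁ ∈ Kσ, ∃ k₂ ∈ Kσ, x = k₁ * (Quotient.out (QuotientGroup.mk y)) * k₂}
        rw [hκ]
        ext z
        constructor
        · rintro ⟨k₁, hk₁, k₂, hk₂, rfl⟩
          exact ⟨k₁, hk₁, (↑κ)⁻¹ * k₂, mul_mem (inv_mem κ.2) hk₂, by group⟩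
        · rintro ⟨k₁, hk₁, k₂, hk₂, rfl⟩
          exact ⟨k₁, hk₁, ↑κ * k₂, mul_mem κ.2 hk₂, by group⟩
      show ((fun g => {x : Gσ | ∃ k₁ ∈ Kσ, ∃ k₂ ∈ Kσ, x = k₁ * g * k₂}) ''
        {x : Gσ | h ↑x ≠ 0}).Finite
      rw [himg]
      exact hmkfin.image _
  · intro h₁ h₂; rfl
  · intro c h; rfl
  · intro x
    by_cases hx : (↑x : G) ∈ K
    · rw [Set.indicator_of_mem hx, Set.indicator_of_mem (by
        show x ∈ Kσ
        rw [hKσdef, Subgroup.mem_subgroupOf]; exact hx)]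
    · rw [Set.indicator_of_notMem hx, Set.indicator_of_notMem (by
        show ¬ x ∈ Kσ
        rw [hKσdef, Subgroup.mem_subgroupOf]; exact hx)]
  · -- multiplicativity
    intro h₁ h₂ hbi₁ hd₁ hinv₁ hbi₂ hd₂ hinv₂ x
    set e : Equiv.Perm (G ⧸ K) := brauerPerm σ K hK with he_def
    set f : G ⧸ K → k :=
      fun c => h₁ (Quotient.out c) * h₂ ((Quotient.out c)⁻¹ * ↑x) with hf_def
    have fval : ∀ g : G, f (QuotientGroup.mk g) = h₁ g * h₂ (g⁻¹ * ↑x) := by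
      intro g
      obtain ⟨κ, hκ⟩ := QuotientGroup.mk_out_eq_mul K g
      show h₁ (Quotient.out (QuotientGroup.mk g)) *
        h₂ ((Quotient.out (QuotientGroup.mk g))⁻¹ * ↑x) = _
      rw [hκ]
      congr 1
      · have := hbi₁ 1 ↑κ g (one_mem K) κ.2
        rwa [one_mul] at this
      · have heq : (g * ↑κ)⁻¹ * (↑x : G) = (↑κ : G)⁻¹ * (g⁻¹ * ↑x) * 1 := by group
        rw [heq]
        exact hbi₂ _ _ _ (inv_mem κ.2) (one_mem K)
    have hfe : ∀ c, f (e c) = f c := by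
      intro c
      induction c using QuotientGroup.induction_on with
      | H g =>
        rw [he_def, brauerPerm_mk, fval, fval, hinv₁]
        have h2 : σ (g⁻¹ * ↑x) = (σ g)⁻¹ * ↑x := by
          rw [map_mul, map_inv, x.2]
        rw [← h2, hinv₂]
    have hep : ∀ c, (⇑e)^[p] c = c := by
      have hiter : ∀ (n : ℕ) (g : G),
          (⇑e)^[n] (QuotientGroup.mk g) = QuotientGroup.mk ((⇑σ)^[n] g) := by
        intro n
        induction n with
        | zero => intro g; rfl
        | succ n ihh =>
          intro g
          rw [Function.iterate_succ_apply, Function.iterate_succ_apply]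
          rw [he_def, brauerPerm_mk, ihh]
      intro c
      induction c using QuotientGroup.induction_on with
      | H g => rw [hiter, hσ]
    have hsupp : (Function.support f).Finite := by
      refine (brauer_coset_support_finite K hfinG h₁ hd₁).subset ?_
      intro c hc
      have h1 : h₁ (Quotient.out c) ≠ 0 := by
        intro h0
        apply hc
        show h₁ (Quotient.out c) * h₂ ((Quotient.out c)⁻¹ * ↑x) = 0
        rw [h0, zero_mul]
      exact ⟨Quotient.out c, h1, QuotientGroup.out_eq' c⟩
    have hfix_range : {c : G ⧸ K | e c = c} = Set.range Φ := by
      ext c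
      constructor
      · intro hc
        have hgc : QuotientGroup.mk (Quotient.out c) = c := QuotientGroup.out_eq' c
        have hec : (QuotientGroup.mk (σ (Quotient.out c)) : G ⧸ K) = QuotientGroup.mk (Quotient.out c) := by
          rw [← brauerPerm_mk σ K hK, ← he_def, hgc]
          exact hc
        have hmem : (Quotient.out c)⁻¹ * σ (Quotient.out c) ∈ K := by
          have h1 : (σ (Quotient.out c))⁻¹ * Quotient.out c ∈ K := QuotientGroup.eq.mp hec
          have h2 := inv_mem h1
          rwa [mul_inv_rev, inv_inv] at h2
        obtain ⟨g₀, hg₀σ, hg₀K⟩ := hplain (Quotient.out c) hmem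
        refine ⟨QuotientGroup.mk (⟨g₀, hg₀σ⟩ : Gσ), ?_⟩
        rw [hΦmk]
        show QuotientGroup.mk g₀ = c
        rw [← hgc]
        exact QuotientGroup.eq.mpr hg₀K
      · rintro ⟨q, rfl⟩
        show e (QuotientGroup.mk (↑(Quotient.out q) : G)) = _
        rw [he_def, brauerPerm_mk, (Quotient.out q).2]
    -- finite sum decomposition
    set S : Finset (G ⧸ K) := hsupp.toFinset with hS_def
    have hstabT : ∀ c ∈ S.filter (fun c => ¬ e c = c), e c ∈ S.filter (fun c => ¬ e c = c) := by
      intro c hc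
      rw [Finset.mem_filter] at hc ⊢
      refine ⟨?_, fun hfix => hc.2 (e.injective hfix)⟩
      rw [hS_def, Set.Finite.mem_toFinset] at hc ⊢
      show f (e c) ≠ 0
      rw [hfe]
      exact hc.1
    have hnfT : ∀ c ∈ S.filter (fun c => ¬ e c = c), e c ≠ c := by
      intro c hc
      exact (Finset.mem_filter.mp hc).2
    have hzero : ∑ c ∈ S.filter (fun c => ¬ e c = c), f c = 0 :=
      brauer_aux_sum_nonfixed hp e hep f hfe _ _ le_rfl hstabT hnfT
    have hsplit : ∑ c ∈ S, f c = ∑ c ∈ S.filter (fun c => e c = c), f c := by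
      rw [← Finset.sum_filter_add_sum_filter_not S (fun c => e c = c) f, hzero, add_zero]
    have hfixsum : ∑ᶠ c ∈ {c : G ⧸ K | e c = c}, f c
        = ∑ c ∈ S.filter (fun c => e c = c), f c := by
      refine finsum_mem_eq_sum_of_inter_support_eq f ?_
      ext c
      simp only [Set.mem_inter_iff, Set.mem_setOf_eq, Finset.coe_filter, hS_def,
        Set.Finite.mem_toFinset, Function.mem_support]
      tauto
    calc heckeMul K h₁ h₂ (↑x : G) = ∑ᶠ c, f c := rfl
      _ = ∑ c ∈ S, f c := finsum_eq_sum f hsupp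
      _ = ∑ c ∈ S.filter (fun c => e c = c), f c := hsplit
      _ = ∑ᶠ c ∈ {c : G ⧸ K | e c = c}, f c := hfixsum.symm
      _ = ∑ᶠ c ∈ Set.range Φ, f c := by rw [hfix_range]
      _ = ∑ᶠ q, f (Φ q) := finsum_mem_range hΦinj
      _ = heckeMul Kσ (fun y : Gσ => h₁ ↑y) (fun y : Gσ => h₂ ↑y) x := by
        refine finsum_congr fun q => ?_
        show f (QuotientGroup.mk (↑(Quotient.out q) : G)) = _
        rw [fval]
        rfl
end

section
/- Let K be a profinite group acting continuously on a locally compact Hausdorff topological space X, such that the action is free and proper (the map K × X → X × X, (κ,x) ↦ (κ·x, x), is a proper map). Then the natural map from X to the inverse limit, over the open normal subgroups U of K (ordered by reverse inclusion), of the quotient spaces X/U with their quotient topologies, is a homeomorphism. -/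
open Topology Pointwise

open MulAction in
private lemma orbit_mk_eq_iff {G : Type*} [Group G] {α : Type*} [MulAction G α] {x y : α} :
    Quotient.mk (orbitRel G α) x = Quotient.mk (orbitRel G α) y ↔ x ∈ orbit G y := by
  rw [Quotient.eq]
  exact MulAction.orbitRel_apply

/--
Let `K` be a profinite group acting continuously, freely and properly on a locally
compact Hausdorff space `X`.  Then the natural map from `X` to the inverse limit of the
quotient spaces `X/U`, taken over the open normal subgroups `U ≤ K` (ordered by reverse
inclusion), is a homeomorphism.  This is expressed as: the natural map into the product
`Π U, X/U` is a topological embedding whose range is exactly the set of compatible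
families, i.e. the inverse limit with its subspace topology.
-/
theorem profinite_free_proper_action_quotient_limit
    (K : Type*) [Group K] [TopologicalSpace K] [IsTopologicalGroup K]
    [CompactSpace K] [T2Space K] [TotallyDisconnectedSpace K]
    (X : Type*) [TopologicalSpace X] [LocallyCompactSpace X] [T2Space X]
    [MulAction K X] [ContinuousSMul K X]
    (hfree : ∀ (κ : K) (x : X), κ • x = x → κ = 1)
    (hproper : IsProperMap (fun q : K × X => (q.1 • q.2, q.2))) :
    IsEmbedding
      (fun (x : X) (U : {U : Subgroup K // U.Normal ∧ IsOpen (U : Set K)}) =>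
        Quotient.mk (MulAction.orbitRel ↥U.1 X) x) ∧
    Set.range
      (fun (x : X) (U : {U : Subgroup K // U.Normal ∧ IsOpen (U : Set K)}) =>
        Quotient.mk (MulAction.orbitRel ↥U.1 X) x) =
      {f : ∀ U : {U : Subgroup K // U.Normal ∧ IsOpen (U : Set K)},
          Quotient (MulAction.orbitRel ↥U.1 X) |
        ∀ U V : {U : Subgroup K // U.Normal ∧ IsOpen (U : Set K)},
          U.1 ≤ V.1 → ∀ x : X,
            f U = Quotient.mk (MulAction.orbitRel ↥U.1 X) x →
            f V = Quotient.mk (MulAction.orbitRel ↥V.1 X) x} := by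
  classical
  set ι := {U : Subgroup K // U.Normal ∧ IsOpen (U : Set K)} with hι
  set F : X → ∀ U : ι, Quotient (MulAction.orbitRel ↥U.1 X) :=
    fun (x : X) (U : ι) => Quotient.mk (MulAction.orbitRel ↥U.1 X) x with hF
  have hne : Nonempty ι := ⟨⟨⊤, inferInstance, by simp⟩⟩
  -- the intersection of two elements of ι is again in ι
  have hinf : ∀ U V : ι, ∃ W : ι, W.1 ≤ U.1 ∧ W.1 ≤ V.1 := by
    rintro ⟨U, hUn, hUo⟩ ⟨V, hVn, hVo⟩
    refine ⟨⟨U ⊓ V, ⟨fun n hn g => ?_⟩, ?_⟩, inf_le_left, inf_le_right⟩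
    · rw [Subgroup.mem_inf] at hn ⊢
      exact ⟨hUn.conj_mem n hn.1 g, hVn.conj_mem n hn.2 g⟩
    · rw [Subgroup.coe_inf]
      exact hUo.inter hVo
  -- every open neighbourhood of 1 contains an open normal subgroup
  have hkey : ∀ Ω : Set K, IsOpen Ω → (1 : K) ∈ Ω → ∃ U : ι, (U.1 : Set K) ⊆ Ω := by
    intro Ω hΩ h1
    obtain ⟨W, hWclopen, h1W, hWΩ⟩ := compact_exists_isClopen_in_isOpen hΩ h1
    obtain ⟨H, hH⟩ :=
      IsTopologicalGroup.exist_openNormalSubgroup_sub_clopen_nhds_of_one hWclopen h1W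
    exact ⟨⟨H.toSubgroup, H.isNormal', H.isOpen'⟩, hH.trans hWΩ⟩
  -- each U ∈ ι is compact
  have hUcompact : ∀ U : ι, IsCompact (U.1 : Set K) := fun U =>
    (U.1.isClosed_of_isOpen U.2.2).isCompact
  -- each orbit is compact
  have horbit : ∀ (U : ι) (x : X), IsCompact (MulAction.orbit ↥U.1 x) := by
    intro U x
    have : MulAction.orbit ↥U.1 x = (fun κ : K => κ • x) '' (U.1 : Set K) := by
      ext y
      constructor
      · rintro ⟨⟨u, hu⟩, rfl⟩
        exact ⟨u, hu, rfl⟩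
      · rintro ⟨u, hu, rfl⟩
        exact ⟨⟨u, hu⟩, rfl⟩
    rw [this]
    exact (hUcompact U).image (continuous_id.smul continuous_const)
  -- injectivity
  have hinj : Function.Injective F := by
    intro x y hxy
    set S : ι → Set K := fun U => {κ | κ ∈ U.1 ∧ κ • y = x} with hS
    have hSne : ∀ U : ι, (S U).Nonempty := by
      intro U
      have h := congrFun hxy U
      rw [hF] at h
      simp only at h
      rw [orbit_mk_eq_iff] at h
      obtain ⟨u, hu⟩ := h
      exact ⟨(u : K), u.2, hu⟩
    have hSclosed : ∀ U : ι, IsClosed (S U) := by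
      intro U
      exact (U.1.isClosed_of_isOpen U.2.2).inter
        (isClosed_eq (continuous_id.smul continuous_const) continuous_const)
    have hScompact : ∀ U : ι, IsCompact (S U) := fun U => (hSclosed U).isCompact
    have hdir : Directed (· ⊇ ·) S := by
      intro U V
      obtain ⟨W, hWU, hWV⟩ := hinf U V
      exact ⟨W, fun κ hκ => ⟨hWU hκ.1, hκ.2⟩, fun κ hκ => ⟨hWV hκ.1, hκ.2⟩⟩
    obtain ⟨κ, hκ⟩ :=
      IsCompact.nonempty_iInter_of_directed_nonempty_isCompact_isClosed S hdir hSne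
        hScompact hSclosed
    simp only [Set.mem_iInter] at hκ
    have hκ1 : κ = 1 := by
      by_contra h
      obtain ⟨U, hU⟩ := hkey {κ}ᶜ (isClosed_singleton.isOpen_compl)
        (by simpa using (Ne.symm h))
      exact hU (hκ U).1 rfl
    have := (hκ (Classical.arbitrary ι)).2
    rw [hκ1, one_smul] at this
    exact this.symm
  -- continuity
  have hcont : Continuous F := by
    refine continuous_pi fun U => ?_
    exact continuous_quot_mk
  -- inducing
  have hind : IsInducing F := by
    rw [isInducing_iff_nhds]
    intro x
    refine le_antisymm ((hcont.tendsto x).le_comap) ?_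
    intro W hW
    obtain ⟨W', hW'W, hW'open, hxW'⟩ := mem_nhds_iff.mp hW
    -- find a small open normal subgroup and an invariant open neighbourhood
    have hsmul : Continuous (fun p : K × X => p.1 • p.2) := continuous_smul
    have hpre : IsOpen ((fun p : K × X => p.1 • p.2) ⁻¹' W') := hW'open.preimage hsmul
    have h1x : ((1 : K), x) ∈ (fun p : K × X => p.1 • p.2) ⁻¹' W' := by
      simp [hxW']
    obtain ⟨Ω, N, hΩopen, hNopen, h1Ω, hxN, hΩN⟩ := isOpen_prod_iff.mp hpre 1 x h1x
    obtain ⟨U, hUΩ⟩ := hkey Ω hΩopen h1Ω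
    set V : Set X := ⋃ κ : ↥U.1, (κ : K) • N with hV
    have hVopen : IsOpen V := isOpen_iUnion fun κ => hNopen.smul _
    have hxV : x ∈ V := Set.mem_iUnion.mpr ⟨1, ⟨x, hxN, one_smul _ _⟩⟩
    have hVW' : V ⊆ W' := by
      rintro y hy
      rw [hV] at hy
      obtain ⟨κ, n, hn, rfl⟩ := by
        simpa only [Set.mem_iUnion, Set.mem_smul_set] using hy
      exact hΩN (Set.mk_mem_prod (hUΩ κ.2) hn)
    have hVinv : ∀ (u : ↥U.1) (v : X), v ∈ V → (u : K) • v ∈ V := by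
      rintro u v hv
      rw [hV] at hv
      obtain ⟨κ, n, hn, rfl⟩ := by
        simpa only [Set.mem_iUnion, Set.mem_smul_set] using hv
      rw [hV]
      simp only [Set.mem_iUnion, Set.mem_smul_set]
      exact ⟨u * κ, n, hn, by simp [mul_smul]⟩
    -- the image of V in X/U is open
    set Q := Quotient.mk (MulAction.orbitRel ↥U.1 X) with hQ
    have hsat : Q ⁻¹' (Q '' V) = V := by
      ext y
      constructor
      · rintro ⟨v, hv, hvy⟩
        rw [hQ, orbit_mk_eq_iff] at hvy
        obtain ⟨u, hu⟩ := hvy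
        have h3 : y = ((u⁻¹ : ↥U.1) : K) • v := by
          rw [← hu]
          exact (inv_smul_smul u y).symm
        rw [h3]
        exact hVinv u⁻¹ v hv
      · exact fun hy => ⟨y, hy, rfl⟩
    have hQVopen : IsOpen (Q '' V) := by
      rw [hQ]
      rw [isOpen_coinduced (f := Q)]
      rw [hsat]
      exact hVopen
    refine Filter.mem_comap.mpr ⟨(fun g : ∀ U : ι, Quotient (MulAction.orbitRel ↥U.1 X)
        => g U) ⁻¹' (Q '' V), ?_, ?_⟩
    · exact (hQVopen.preimage (continuous_apply U)).mem_nhds ⟨x, hxV, rfl⟩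
    · intro y hy
      obtain ⟨v, hv, hvy⟩ := hy
      rw [hQ, orbit_mk_eq_iff] at hvy
      obtain ⟨u, rfl⟩ := MulAction.mem_orbit_symm.mp hvy
      exact hW'W (hVW' (hVinv u v hv))
  refine ⟨⟨hind, hinj⟩, ?_⟩
  -- range equality
  ext f
  constructor
  · rintro ⟨x, rfl⟩
    intro U V hUV y hy
    rw [hF] at hy ⊢
    simp only at hy ⊢
    rw [orbit_mk_eq_iff] at hy ⊢
    obtain ⟨u, rfl⟩ := hy
    exact ⟨⟨(u : K), hUV u.2⟩, rfl⟩
  · intro hf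
    have hrep : ∀ U : ι, ∃ x : X, f U = Quotient.mk (MulAction.orbitRel ↥U.1 X) x := by
      intro U
      obtain ⟨x, hx⟩ := Quotient.exists_rep (f U)
      exact ⟨x, hx.symm⟩
    choose rep hrep using hrep
    set A : ι → Set X := fun U => {x | f U = Quotient.mk (MulAction.orbitRel ↥U.1 X) x}
      with hA
    have hAorbit : ∀ U : ι, A U = MulAction.orbit ↥U.1 (rep U) := by
      intro U
      ext x
      simp only [hA, Set.mem_setOf_eq, hrep U]
      rw [orbit_mk_eq_iff]
      exact MulAction.mem_orbit_symm
    have hAcompact : ∀ U : ι, IsCompact (A U) := fun U => (hAorbit U) ▸ horbit U (rep U)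
    have hAclosed : ∀ U : ι, IsClosed (A U) := fun U => (hAcompact U).isClosed
    have hAne : ∀ U : ι, (A U).Nonempty := fun U =>
      (hAorbit U) ▸ ⟨rep U, MulAction.mem_orbit_self _⟩
    have hdir : Directed (· ⊇ ·) A := by
      intro U V
      obtain ⟨W, hWU, hWV⟩ := hinf U V
      refine ⟨W, fun x hx => hf W U hWU x hx, fun x hx => hf W V hWV x hx⟩
    obtain ⟨x, hx⟩ :=
      IsCompact.nonempty_iInter_of_directed_nonempty_isCompact_isClosed A hdir hAne
        hAcompact hAclosed
    simp only [Set.mem_iInter] at hx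
    exact ⟨x, funext fun U => (hx U).symm⟩
end

section
/- Let p be a prime, k an algebraically closed field of characteristic p, G a group, and σ an automorphism of G with σ^p = id. Let V be a nonzero finite-dimensional k-vector space with a group representation ρ : G → GL(V) that is irreducible (V is a simple module over the group algebra k[G]). Suppose there exists a k-linear bijection A : V → V satisfying A(ρ(g)v) = ρ(σ(g))(A(v)) for all g ∈ G and v ∈ V. Then there exists a unique k-linear map f : V → V satisfying f(ρ(g)v) = ρ(σ(g))(f(v)) for all g ∈ G, v ∈ V, and f^p = id_V. -/
/--
Let `p` be a prime, `k` an algebraically closed field of characteristic `p`, `G` a group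
and `σ` an automorphism of `G` with `σ^p = id`.  Let `V` be a nonzero finite-dimensional
`k`-vector space with an irreducible representation `ρ : G → GL(V)`.  If there is a
`k`-linear bijection `A : V → V` intertwining `ρ` with `ρ ∘ σ`, then there is a unique
`k`-linear map `f : V → V` intertwining `ρ` with `ρ ∘ σ` and satisfying `f^p = id`.
-/
theorem unique_compatible_sigma_action_on_irreducible
    (p : ℕ) (hp : p.Prime)
    (k : Type*) [Field k] [IsAlgClosed k] [CharP k p]
    (G : Type*) [Group G]
    (σ : G ≃* G) (hσ : ∀ g, (⇑σ)^[p] g = g)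
    (V : Type*) [AddCommGroup V] [Module k V] [FiniteDimensional k V] [Nontrivial V]
    (ρ : Representation k G V)
    (hirr : ∀ W : Submodule k V, (∀ (g : G), ∀ w ∈ W, ρ g w ∈ W) → W = ⊥ ∨ W = ⊤)
    (hA : ∃ A : V ≃ₗ[k] V, ∀ (g : G) (v : V), A (ρ g v) = ρ (σ g) (A v)) :
    ∃! f : V →ₗ[k] V,
      (∀ (g : G) (v : V), f (ρ g v) = ρ (σ g) (f v)) ∧ f ^ p = 1 := by
  classical
  haveI : Fact p.Prime := ⟨hp⟩
  -- Schur's lemma: any endomorphism commuting with ρ is a scalar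
  have schur : ∀ T : V →ₗ[k] V, (∀ g v, T (ρ g v) = ρ g (T v)) → ∃ c : k, T = c • 1 := by
    intro T hT
    obtain ⟨c, hc⟩ := Module.End.exists_eigenvalue (T : Module.End k V)
    refine ⟨c, ?_⟩
    have hstab : ∀ g : G, ∀ w ∈ Module.End.eigenspace T c,
        ρ g w ∈ Module.End.eigenspace T c := by
      intro g w hw
      rw [Module.End.mem_eigenspace_iff] at hw ⊢
      rw [hT, hw, map_smul]
    rcases hirr _ hstab with h | h
    · exact absurd h hc
    · ext v
      have hv : v ∈ Module.End.eigenspace T c := h ▸ Submodule.mem_top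
      rw [Module.End.mem_eigenspace_iff] at hv
      simpa using hv
  -- iterating an intertwiner
  have iter : ∀ (f : V →ₗ[k] V), (∀ g v, f (ρ g v) = ρ (σ g) (f v)) →
      ∀ (n : ℕ) (g : G) (v : V), (f ^ n) (ρ g v) = ρ ((⇑σ)^[n] g) ((f ^ n) v) := by
    intro f hf n
    induction n with
    | zero => intro g v; simp
    | succ n ih =>
      intro g v
      rw [pow_succ', Module.End.mul_apply, Module.End.mul_apply, ih, hf,
        Function.iterate_succ_apply']
  obtain ⟨A, hAi⟩ := hA
  set B : V →ₗ[k] V := A.toLinearMap with hBdef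
  have hB : ∀ g v, B (ρ g v) = ρ (σ g) (B v) := hAi
  have hBp : ∀ g v, (B ^ p) (ρ g v) = ρ g ((B ^ p) v) := by
    intro g v; rw [iter B hB p g v, hσ]
  obtain ⟨c, hc⟩ := schur _ hBp
  have hBpinj : Function.Injective (B ^ p) := by
    have h1 : ⇑(B ^ p) = (⇑B)^[p] := funext fun v => Module.End.pow_apply B p v
    rw [h1]
    exact Function.Injective.iterate A.injective p
  obtain ⟨v0, hv0⟩ := exists_ne (0 : V)
  have hc0 : c ≠ 0 := by
    intro h
    apply hv0
    apply hBpinj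
    rw [hc, map_zero]
    simp [h]
  obtain ⟨d, hd⟩ := IsAlgClosed.exists_pow_nat_eq c hp.pos
  have hd0 : d ≠ 0 := by
    intro h
    apply hc0
    rw [← hd, h, zero_pow hp.ne_zero]
  refine ⟨d⁻¹ • B, ⟨?_, ?_⟩, ?_⟩
  · intro g v
    simp [hB]
  · rw [smul_pow, hc, inv_pow, hd, smul_smul, inv_mul_cancel₀ hc0, one_smul]
  · rintro f' ⟨hf'1, hf'2⟩
    set f : V →ₗ[k] V := d⁻¹ • B with hfdef
    have hfi : ∀ g v, f (ρ g v) = ρ (σ g) (f v) := by intro g v; simp [hfdef, hB]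
    have hfp : f ^ p = 1 := by
      rw [hfdef, smul_pow, hc, inv_pow, hd, smul_smul, inv_mul_cancel₀ hc0, one_smul]
    -- consider T = f * f'^(p-1), which commutes with ρ
    have hcomm : ∀ g v, (f * f' ^ (p - 1)) (ρ g v) = ρ g ((f * f' ^ (p - 1)) v) := by
      intro g v
      have h1 := iter f' hf'1 (p - 1) g v
      rw [Module.End.mul_apply, h1, hfi, Module.End.mul_apply]
      congr 1
      rw [← Function.iterate_succ_apply' (⇑σ) (p - 1) g, Nat.succ_eq_add_one,
        Nat.sub_add_cancel hp.one_le, hσ]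
    obtain ⟨e, he⟩ := schur _ hcomm
    have hkey : f = e • f' := by
      have h2 : f * f' ^ (p - 1) * f' = f := by
        rw [mul_assoc, ← pow_succ, Nat.sub_add_cancel hp.one_le, hf'2, mul_one]
      rw [← h2, he, smul_mul_assoc, one_mul]
    have hep : e ^ p = 1 := by
      have h3 : (f ^ p) v0 = v0 := by rw [hfp]; rfl
      rw [hkey, smul_pow, hf'2] at h3
      have h4 : e ^ p • v0 = (1 : k) • v0 := by simpa using h3
      exact smul_left_injective k hv0 h4
    have he1 : e = 1 := by
      have h5 : (e - 1) ^ p = 0 := by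
        rw [sub_pow_char, hep, one_pow, sub_self]
      have h6 := pow_eq_zero_iff hp.ne_zero |>.mp h5
      exact sub_eq_zero.mp h6
    rw [hkey, he1, one_smul]
end
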